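/- arXiv:1709.03570 — 6 statements merged into one kernel-verified Lean document; each statement's English description precedes it below -/
import Mathlib

section
/- With probability at least 1 − δ, the empirical mean never falls below μ by more than z_t at any time: P( ∃ t ∈ ℕ : μ̂_t − μ < −z_t ) ≤ δ. -/
open MeasureTheory ProbabilityTheory Set

/-- KL divergence between Bernoulli(p) and Bernoulli(q) (real-valued formula,
valid when `q ∈ (0,1)`; conventions `0·log 0 = 0` via Lean's `Real.log 0 = 0`, `x/0 = 0`). -/
noncomputable def klBerR (p q : ℝ) : ℝ :=
  p * Real.log (p / q) + (1 - p) * Real.log ((1 - p) / (1 - q))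

lemma convexOn_affine (a b : ℝ) {s : Set ℝ} (hs : Convex ℝ s) :
    ConvexOn ℝ s (fun x => a * x + b) := by
  refine ⟨hs, fun x _ y _ p q hp hq hpq => ?_⟩
  simp only [smul_eq_mul]
  have h2 : (p + q - 1) * b = 0 := by rw [hpq]; ring
  nlinarith [h2]

lemma convexOn_H (μ : ℝ) :
    ConvexOn ℝ (Icc (0:ℝ) 1) (fun x => x * Real.log x + (1 - x) * Real.log (1 - x) +
      ((Real.log (1 - μ) - Real.log μ) * x + (- Real.log (1 - μ)))) := by
  have h1 : ConvexOn ℝ (Icc (0:ℝ) 1) (fun x => x * Real.log x) :=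
    Real.convexOn_mul_log.subset (fun x hx => hx.1) (convex_Icc _ _)
  have h2 : ConvexOn ℝ (Icc (0:ℝ) 1) (fun x : ℝ => (1 - x) * Real.log (1 - x)) := by
    have hA := Real.convexOn_mul_log.comp_affineMap (AffineMap.lineMap (1:ℝ) (0:ℝ))
    have hsub : Icc (0:ℝ) 1 ⊆ (AffineMap.lineMap (1:ℝ) (0:ℝ)) ⁻¹' (Ici 0) := by
      intro x hx
      simp only [Set.mem_preimage, AffineMap.lineMap_apply, Set.mem_Ici, smul_eq_mul,
        vsub_eq_sub, vadd_eq_add]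
      simp only [Set.mem_Icc] at hx
      nlinarith [hx.1, hx.2]
    refine (hA.subset hsub (convex_Icc _ _)).congr (fun x hx => ?_)
    simp only [Function.comp_apply, AffineMap.lineMap_apply, smul_eq_mul, vsub_eq_sub,
      vadd_eq_add]
    have hxx : x * (0 - 1) + 1 = 1 - x := by ring
    rw [hxx]
  have h3 := convexOn_affine (Real.log (1 - μ) - Real.log μ) (- Real.log (1 - μ))
    (convex_Icc (0:ℝ) 1)
  exact (h1.add h2).add h3

lemma klBerR_eq_H {x μ : ℝ} (hx : 0 < x) (hx1 : x < 1) (hμ : 0 < μ) (hμ1 : μ < 1) :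
    klBerR x μ = x * Real.log x + (1 - x) * Real.log (1 - x) +
      ((Real.log (1 - μ) - Real.log μ) * x + (- Real.log (1 - μ))) := by
  unfold klBerR
  rw [Real.log_div (ne_of_gt hx) (ne_of_gt hμ),
    Real.log_div (by linarith : (1:ℝ) - x ≠ 0) (by linarith : (1:ℝ) - μ ≠ 0)]
  ring

lemma klBerR_self {μ : ℝ} (hμ : 0 < μ) (hμ1 : μ < 1) : klBerR μ μ = 0 := by
  unfold klBerR
  rw [div_self (ne_of_gt hμ), div_self (by linarith : (1:ℝ) - μ ≠ 0), Real.log_one]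
  ring

lemma kl_slope {μ z c₀ c : ℝ} (hμ : 0 < μ) (hμ1 : μ < 1) (hz : 0 < z) (hzμ : z < μ)
    (hc₀ : 0 < c₀) (hcc : c₀ ≤ c) (hc1 : c ≤ 1) :
    (c / c₀) * klBerR (μ - c₀ * z) μ ≤ klBerR (μ - c * z) μ := by
  have hc : 0 < c := lt_of_lt_of_le hc₀ hcc
  set θ : ℝ := c₀ / c with hθdef
  have hθ0 : 0 < θ := div_pos hc₀ hc
  have hθ1 : θ ≤ 1 := (div_le_one hc).2 hcc
  have hcz : c * z < μ := lt_of_le_of_lt (by nlinarith : c * z ≤ z) hzμ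
  have hmem1 : μ - c * z ∈ Icc (0:ℝ) 1 := ⟨by linarith, by nlinarith⟩
  have hmem2 : μ ∈ Icc (0:ℝ) 1 := ⟨le_of_lt hμ, le_of_lt hμ1⟩
  have hkey := (convexOn_H μ).2 hmem1 hmem2 (le_of_lt hθ0) (by linarith : (0:ℝ) ≤ 1 - θ)
    (by ring)
  simp only [smul_eq_mul] at hkey
  have hpt : θ * (μ - c * z) + (1 - θ) * μ = μ - c₀ * z := by
    have : θ * c = c₀ := by rw [hθdef]; field_simp
    nlinarith [this]
  rw [hpt] at hkey
  have e1 : klBerR (μ - c₀ * z) μ = (μ - c₀*z) * Real.log (μ - c₀*z) +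
      (1 - (μ - c₀*z)) * Real.log (1 - (μ - c₀*z)) +
      ((Real.log (1 - μ) - Real.log μ) * (μ - c₀*z) + (- Real.log (1 - μ))) := by
    have hc₀z : c₀ * z < μ := by nlinarith
    exact klBerR_eq_H (by nlinarith) (by nlinarith) hμ hμ1
  have e2 : klBerR (μ - c * z) μ = (μ - c*z) * Real.log (μ - c*z) +
      (1 - (μ - c*z)) * Real.log (1 - (μ - c*z)) +
      ((Real.log (1 - μ) - Real.log μ) * (μ - c*z) + (- Real.log (1 - μ))) :=
    klBerR_eq_H (by nlinarith) (by nlinarith) hμ hμ1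
  have e3 : klBerR μ μ = μ * Real.log μ + (1 - μ) * Real.log (1 - μ) +
      ((Real.log (1 - μ) - Real.log μ) * μ + (- Real.log (1 - μ))) :=
    klBerR_eq_H hμ hμ1 hμ hμ1
  have hkl : klBerR (μ - c₀ * z) μ ≤ θ * klBerR (μ - c * z) μ + (1 - θ) * klBerR μ μ := by
    rw [e1, e2, e3]
    simpa using hkey
  rw [klBerR_self hμ hμ1] at hkl
  have h4 : klBerR (μ - c₀ * z) μ ≤ θ * klBerR (μ - c * z) μ := by linarith
  have h5 : (c / c₀) * klBerR (μ - c₀ * z) μ ≤ (c / c₀) * (θ * klBerR (μ - c * z) μ) :=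
    mul_le_mul_of_nonneg_left h4 (by positivity)
  have h6 : (c / c₀) * θ = 1 := by rw [hθdef]; field_simp
  calc (c / c₀) * klBerR (μ - c₀ * z) μ ≤ (c / c₀) * (θ * klBerR (μ - c * z) μ) := h5
    _ = ((c / c₀) * θ) * klBerR (μ - c * z) μ := by ring
    _ = klBerR (μ - c * z) μ := by rw [h6, one_mul]

lemma lam_nonneg {x μ : ℝ} (hx : 0 < x) (hxμ : x ≤ μ) (hμ1 : μ < 1) :
    0 ≤ Real.log ((1 - x) * μ / (x * (1 - μ))) := by
  refine Real.log_nonneg ?_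
  rw [le_div_iff₀ (by nlinarith : (0:ℝ) < x * (1 - μ))]
  nlinarith

lemma chernoff_exp_eq_kl {x μ : ℝ} (hx : 0 < x) (hxμ : x ≤ μ) (hμ0 : 0 < μ) (hμ1 : μ < 1)
    (M : ℕ) :
    Real.exp (Real.log ((1 - x) * μ / (x * (1 - μ))) * ((M:ℝ) * μ - (M:ℝ) * (μ - x))) *
      (1 - μ + μ * Real.exp (-Real.log ((1 - x) * μ / (x * (1 - μ))))) ^ M =
      Real.exp (-((M:ℝ) * klBerR x μ)) := by
  have hx1 : x < 1 := lt_of_le_of_lt hxμ hμ1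
  have h1x : (0:ℝ) < 1 - x := by linarith
  have h1μ : (0:ℝ) < 1 - μ := by linarith
  have hvpos : (0:ℝ) < (1 - x) * μ / (x * (1 - μ)) := by positivity
  set lam : ℝ := Real.log ((1 - x) * μ / (x * (1 - μ))) with hlamdef
  have hexpneg : Real.exp (-lam) = x * (1 - μ) / ((1 - x) * μ) := by
    rw [hlamdef, ← Real.log_inv, Real.exp_log (by positivity)]
    field_simp
  have hV : 1 - μ + μ * Real.exp (-lam) = (1 - μ) / (1 - x) := by
    rw [hexpneg]
    field_simp
    ring
  have hVpow : (1 - μ + μ * Real.exp (-lam)) ^ M = Real.exp ((M:ℝ) * Real.log ((1-μ)/(1-x))) := by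
    rw [hV, ← Real.exp_log (show (0:ℝ) < (1-μ)/(1-x) by positivity), ← Real.exp_nat_mul,
      Real.log_exp]
  have hiden : lam * x + Real.log ((1-μ)/(1-x)) = -klBerR x μ := by
    rw [hlamdef, Real.log_div (by positivity) (by positivity),
      Real.log_mul (ne_of_gt h1x) (ne_of_gt hμ0), Real.log_mul (ne_of_gt hx) (ne_of_gt h1μ),
      Real.log_div (ne_of_gt h1μ) (ne_of_gt h1x)]
    unfold klBerR
    rw [Real.log_div (ne_of_gt hx) (ne_of_gt hμ0),
      Real.log_div (ne_of_gt h1x) (ne_of_gt h1μ)]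
    ring
  rw [hVpow, ← Real.exp_add]
  congr 1
  have : lam * ((M:ℝ) * μ - (M:ℝ) * (μ - x)) = (M:ℝ) * (lam * x) := by ring
  rw [this]
  nlinarith [hiden]

section NoMeas
variable {Ω : Type*} {Y : ℕ → Ω → ℝ}

def Bset (Y : ℕ → Ω → ℝ) (T : Finset ℕ) (μ g : ℝ) (t : ℕ) : Set Ω :=
  {ω | t ∈ T ∧ ∑ j ∈ Finset.range t, Y j ω ≤ (t:ℝ) * μ - g}

def Cset (Y : ℕ → Ω → ℝ) (T : Finset ℕ) (μ g : ℝ) (n : ℕ) : Set Ω :=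
  Bset Y T μ g n \ ⋃ s, ⋃ (_ : s < n), Bset Y T μ g s

lemma mem_Bset {T : Finset ℕ} {μ g : ℝ} {t : ℕ} {ω : Ω} :
    ω ∈ Bset Y T μ g t ↔ t ∈ T ∧ ∑ j ∈ Finset.range t, Y j ω ≤ (t:ℝ) * μ - g := Iff.rfl

lemma Cset_subset (T : Finset ℕ) (μ g : ℝ) (n : ℕ) : Cset Y T μ g n ⊆ Bset Y T μ g n :=
  diff_subset

lemma Cset_disj (T : Finset ℕ) (μ g : ℝ) : Pairwise (Function.onFun Disjoint (Cset Y T μ g)) := by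
  have hd : ∀ m n : ℕ, m < n → Disjoint (Cset Y T μ g m) (Cset Y T μ g n) := by
    intro m n h
    rw [Set.disjoint_left]
    intro x hx hx2
    exact hx2.2 (Set.mem_iUnion.2 ⟨m, Set.mem_iUnion.2 ⟨h, hx.1⟩⟩)
  intro m n hmn
  rcases hmn.lt_or_gt with h | h
  · exact hd m n h
  · exact (hd n m h).symm

lemma Cset_cover (T : Finset ℕ) (μ g : ℝ) :
    (⋃ n, Cset Y T μ g n) = ⋃ n, Bset Y T μ g n := by
  classical
  apply Set.Subset.antisymm (Set.iUnion_mono fun n => Cset_subset T μ g n)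
  intro x hx
  rw [Set.mem_iUnion] at hx
  obtain ⟨n, hn⟩ := hx
  have hex : ∃ n, x ∈ Bset Y T μ g n := ⟨n, hn⟩
  refine Set.mem_iUnion.2 ⟨Nat.find hex, Nat.find_spec hex, fun hmem => ?_⟩
  obtain ⟨s, hs⟩ := Set.mem_iUnion.1 hmem
  obtain ⟨hslt, hxB⟩ := Set.mem_iUnion.1 hs
  exact Nat.find_min hex hslt hxB

lemma meas_sup {s : Set ℕ} {i : ℕ} (hi : i ∈ s) :
    @Measurable Ω ℝ (⨆ j ∈ s, MeasurableSpace.comap (Y j) inferInstance) _ (Y i) :=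
  measurable_iff_comap_le.2
    (le_iSup₂ (f := fun j (_ : j ∈ s) => MeasurableSpace.comap (Y j) inferInstance) i hi)

lemma Bset_meas_sup (T : Finset ℕ) (μ g : ℝ) {s n : ℕ}
    (hs : s ≤ n) :
    MeasurableSet[⨆ j ∈ Set.Iio n, MeasurableSpace.comap (Y j) inferInstance]
      (Bset Y T μ g s) := by
  classical
  by_cases hsT : s ∈ T
  · have : Bset Y T μ g s = {ω | ∑ j ∈ Finset.range s, Y j ω ≤ (s:ℝ) * μ - g} := by
      ext ω; simp [mem_Bset, hsT]
    rw [this]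
    have hsum : @Measurable Ω ℝ (⨆ j ∈ Set.Iio n, MeasurableSpace.comap (Y j) inferInstance) _
        (fun ω => ∑ j ∈ Finset.range s, Y j ω) :=
      Finset.measurable_sum _ fun j hj =>
        meas_sup (lt_of_lt_of_le (Finset.mem_range.1 hj) hs)
    exact hsum measurableSet_Iic
  · have : Bset Y T μ g s = ∅ := by ext ω; simp [mem_Bset, hsT]
    rw [this]
    exact @MeasurableSet.empty Ω (⨆ j ∈ Set.Iio n, MeasurableSpace.comap (Y j) inferInstance)

lemma Cset_meas_sup (T : Finset ℕ) (μ g : ℝ) (n : ℕ) :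
    MeasurableSet[⨆ j ∈ Set.Iio n, MeasurableSpace.comap (Y j) inferInstance]
      (Cset Y T μ g n) :=
  (Bset_meas_sup T μ g le_rfl).diff
    (MeasurableSet.iUnion fun s => MeasurableSet.iUnion fun hs => Bset_meas_sup T μ g hs.le)

end NoMeas

section WithMeas
variable {Ω : Type*} [MeasurableSpace Ω] {P : Measure Ω} [IsProbabilityMeasure P]
variable {Y : ℕ → Ω → ℝ}

lemma integrable_of_bdd {f : Ω → ℝ} (hm : Measurable f) {C : ℝ} (h : ∀ ω, |f ω| ≤ C) :
    Integrable f P :=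
  (integrable_const C).mono' hm.aestronglyMeasurable (Filter.Eventually.of_forall h)

lemma factor_le {Yi : Ω → ℝ} (hm : Measurable Yi) (hb : ∀ ω, Yi ω ∈ Icc (0:ℝ) 1)
    {μ : ℝ} (hmean : ∫ ω, Yi ω ∂P = μ) (lam : ℝ) :
    ∫ ω, Real.exp (-lam * Yi ω) ∂P ≤ 1 - μ + μ * Real.exp (-lam) := by
  have hYint : Integrable Yi P := integrable_of_bdd hm (C := 1) (fun ω => by
    have := hb ω; rw [abs_le]; constructor <;> [linarith [this.1]; exact this.2])
  have hpt : ∀ ω, Real.exp (-lam * Yi ω) ≤ 1 + (Real.exp (-lam) - 1) * Yi ω := by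
    intro ω
    obtain ⟨h0, h1⟩ := hb ω
    have hc := convexOn_exp.2 (mem_univ (0:ℝ)) (mem_univ (-lam)) (by linarith : (0:ℝ) ≤ 1 - Yi ω)
      h0 (by ring)
    simp only [smul_eq_mul, mul_zero, Real.exp_zero, mul_one, zero_add] at hc
    calc Real.exp (-lam * Yi ω) = Real.exp (Yi ω * -lam) := by ring_nf
      _ ≤ (1 - Yi ω) * 1 + Yi ω * Real.exp (-lam) := by simpa using hc
      _ = 1 + (Real.exp (-lam) - 1) * Yi ω := by ring
  have hint2 : Integrable (fun ω => 1 + (Real.exp (-lam) - 1) * Yi ω) P :=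
    (integrable_const 1).add (hYint.const_mul _)
  have hint1 : Integrable (fun ω => Real.exp (-lam * Yi ω)) P := by
    refine integrable_of_bdd ((Real.measurable_exp).comp (hm.const_mul (-lam)))
      (C := max 1 (Real.exp (-lam))) (fun ω => ?_)
    rw [abs_of_pos (Real.exp_pos _)]
    obtain ⟨h0, h1⟩ := hb ω
    rcases le_or_gt lam 0 with h | h
    · exact le_max_of_le_right (Real.exp_le_exp.2 (by nlinarith))
    · exact le_max_of_le_left (Real.exp_le_one_iff.2 (by nlinarith))
  calc ∫ ω, Real.exp (-lam * Yi ω) ∂P ≤ ∫ ω, (1 + (Real.exp (-lam) - 1) * Yi ω) ∂P :=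
        integral_mono hint1 hint2 hpt
    _ = 1 + (Real.exp (-lam) - 1) * μ := by
        rw [integral_add (integrable_const 1) (hYint.const_mul _), integral_const,
          integral_const_mul, hmean]; simp
    _ = 1 - μ + μ * Real.exp (-lam) := by ring

lemma factor_ge {Yi : Ω → ℝ} (hm : Measurable Yi) (hb : ∀ ω, Yi ω ∈ Icc (0:ℝ) 1)
    {μ : ℝ} (hmean : ∫ ω, Yi ω ∂P = μ) {lam : ℝ} (hlam : 0 ≤ lam) :
    Real.exp (-lam * μ) ≤ ∫ ω, Real.exp (-lam * Yi ω) ∂P := by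
  have hYint : Integrable Yi P := integrable_of_bdd hm (C := 1) (fun ω => by
    have := hb ω; rw [abs_le]; constructor <;> [linarith [this.1]; exact this.2])
  have hpt : ∀ ω, Real.exp (-lam * μ) * (1 + (-lam) * (Yi ω - μ)) ≤ Real.exp (-lam * Yi ω) := by
    intro ω
    have h1 : (-lam) * (Yi ω - μ) + 1 ≤ Real.exp ((-lam) * (Yi ω - μ)) := Real.add_one_le_exp _
    have h2 : Real.exp (-lam * μ) * Real.exp ((-lam) * (Yi ω - μ)) = Real.exp (-lam * Yi ω) := by
      rw [← Real.exp_add]; ring_nf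
    calc Real.exp (-lam * μ) * (1 + (-lam) * (Yi ω - μ))
        ≤ Real.exp (-lam * μ) * Real.exp ((-lam) * (Yi ω - μ)) := by
          apply mul_le_mul_of_nonneg_left (by linarith) (Real.exp_pos _).le
      _ = Real.exp (-lam * Yi ω) := h2
  have hsub : Integrable (fun ω => Yi ω - μ) P := hYint.sub (integrable_const μ)
  have hsub2 : Integrable (fun ω => (1:ℝ) + (-lam) * (Yi ω - μ)) P :=
    (integrable_const 1).add (hsub.const_mul _)
  have hint1 : Integrable (fun ω => Real.exp (-lam * μ) * (1 + (-lam) * (Yi ω - μ))) P :=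
    Integrable.const_mul hsub2 _
  have hint2 : Integrable (fun ω => Real.exp (-lam * Yi ω)) P := by
    refine integrable_of_bdd ((Real.measurable_exp).comp (hm.const_mul (-lam))) (C := 1)
      (fun ω => ?_)
    rw [abs_of_pos (Real.exp_pos _)]
    exact Real.exp_le_one_iff.2 (by nlinarith [(hb ω).1])
  have hval : ∫ ω, (1:ℝ) + (-lam) * (Yi ω - μ) ∂P = 1 := by
    rw [integral_add (integrable_const 1) (hsub.const_mul _), integral_const, integral_const_mul,
      integral_sub hYint (integrable_const μ), hmean, integral_const]
    simp
  calc Real.exp (-lam * μ) = ∫ ω, Real.exp (-lam * μ) * (1 + (-lam) * (Yi ω - μ)) ∂P := by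
        rw [integral_const_mul, hval, mul_one]
    _ ≤ ∫ ω, Real.exp (-lam * Yi ω) ∂P := integral_mono hint1 hint2 hpt

set_option linter.unusedSectionVars false
variable {Y : ℕ → Ω → ℝ}

lemma indep_prefix (hmeas : ∀ i, Measurable (Y i))
    (hindep : iIndepFun Y P) (n : ℕ) {f g : Ω → ℝ}
    (hf : @Measurable Ω ℝ (⨆ j ∈ Set.Iio n, MeasurableSpace.comap (Y j) inferInstance) _ f)
    (hg : @Measurable Ω ℝ (⨆ j ∈ Set.Ici n, MeasurableSpace.comap (Y j) inferInstance) _ g) :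
    IndepFun f g P := by
  have h := indep_iSup_of_disjoint (fun i => (hmeas i).comap_le)
    ((iIndepFun_iff_iIndep _ _ _).1 hindep) (S := Set.Iio n) (T := Set.Ici n) (Set.Iio_disjoint_Ici (le_refl n))
  rw [IndepFun_iff_Indep, Indep_iff]
  rw [Indep_iff] at h
  intro t1 t2 ht1 ht2
  exact h t1 t2 (hf.comap_le t1 ht1) (hg.comap_le t2 ht2)

set_option linter.unusedSectionVars false

lemma sum_Y_nonneg (hbdd : ∀ i ω, Y i ω ∈ Icc (0:ℝ) 1) (s : Finset ℕ) (ω : Ω) :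
    0 ≤ ∑ j ∈ s, Y j ω :=
  Finset.sum_nonneg fun j _ => (hbdd j ω).1

lemma exp_sum_le_one (hbdd : ∀ i ω, Y i ω ∈ Icc (0:ℝ) 1) {lam : ℝ} (hlam : 0 ≤ lam)
    (s : Finset ℕ) (ω : Ω) : Real.exp (-lam * ∑ j ∈ s, Y j ω) ≤ 1 :=
  Real.exp_le_one_iff.2 (by nlinarith [sum_Y_nonneg hbdd s ω])

lemma integrable_exp_sum (hmeas : ∀ i, Measurable (Y i))
    (hbdd : ∀ i ω, Y i ω ∈ Icc (0:ℝ) 1) {lam : ℝ} (hlam : 0 ≤ lam) (s : Finset ℕ) :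
    Integrable (fun ω => Real.exp (-lam * ∑ j ∈ s, Y j ω)) P :=
  integrable_of_bdd
    (Real.measurable_exp.comp ((Finset.measurable_sum s fun j _ => hmeas j).const_mul _))
    (C := 1) (fun ω => by
      rw [abs_of_pos (Real.exp_pos _)]; exact exp_sum_le_one hbdd hlam s ω)

lemma expSum_bounds (hmeas : ∀ i, Measurable (Y i))
    (hindep : iIndepFun Y P)
    (hbdd : ∀ i ω, Y i ω ∈ Icc (0:ℝ) 1) {μ : ℝ} (hμ : μ ∈ Ioo (0:ℝ) 1)
    (hmean : ∀ i, ∫ ω, Y i ω ∂P = μ) {lam : ℝ} (hlam : 0 ≤ lam) (a : ℕ) :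
    ∀ b, a ≤ b →
      Real.exp (-lam * (((b - a : ℕ) : ℝ) * μ)) ≤
          ∫ ω, Real.exp (-lam * ∑ j ∈ Finset.Ico a b, Y j ω) ∂P ∧
        ∫ ω, Real.exp (-lam * ∑ j ∈ Finset.Ico a b, Y j ω) ∂P ≤
          (1 - μ + μ * Real.exp (-lam)) ^ (b - a : ℕ) := by
  have hV : 0 < 1 - μ + μ * Real.exp (-lam) := by nlinarith [Real.exp_pos (-lam), hμ.1, hμ.2]
  refine Nat.le_induction ?_ ?_
  · simp
  · intro b hab IH
    have hsplit : (fun ω => Real.exp (-lam * ∑ j ∈ Finset.Ico a (b+1), Y j ω)) =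
        (fun ω => Real.exp (-lam * ∑ j ∈ Finset.Ico a b, Y j ω)) *
          (fun ω => Real.exp (-lam * Y b ω)) := by
      funext ω
      rw [Pi.mul_apply, ← Real.exp_add, Finset.sum_Ico_succ_top hab]
      ring_nf
    have hm1 : @Measurable Ω ℝ (⨆ j ∈ Set.Iio b, MeasurableSpace.comap (Y j) inferInstance) _
        (fun ω => Real.exp (-lam * ∑ j ∈ Finset.Ico a b, Y j ω)) := by
      refine Real.measurable_exp.comp (Measurable.const_mul ?_ _)
      exact Finset.measurable_sum _ fun j hj => meas_sup (Finset.mem_Ico.1 hj).2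
    have hm2 : @Measurable Ω ℝ (⨆ j ∈ Set.Ici b, MeasurableSpace.comap (Y j) inferInstance) _
        (fun ω => Real.exp (-lam * Y b ω)) := by
      refine Real.measurable_exp.comp (Measurable.const_mul ?_ _)
      exact meas_sup (Set.mem_Ici.2 le_rfl)
    have hInd := indep_prefix hmeas hindep b hm1 hm2
    have hint1 := integrable_exp_sum (P := P) hmeas hbdd hlam (Finset.Ico a b)
    have hint2 : Integrable (fun ω => Real.exp (-lam * Y b ω)) P := by
      have := integrable_exp_sum (P := P) hmeas hbdd hlam {b}
      simpa using this
    have hprod : ∫ ω, Real.exp (-lam * ∑ j ∈ Finset.Ico a (b+1), Y j ω) ∂P =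
        (∫ ω, Real.exp (-lam * ∑ j ∈ Finset.Ico a b, Y j ω) ∂P) *
          ∫ ω, Real.exp (-lam * Y b ω) ∂P := by
      rw [show (fun ω => Real.exp (-lam * ∑ j ∈ Finset.Ico a (b+1), Y j ω)) = _ from hsplit]
      exact hInd.integral_mul_eq_mul_integral hint1.aestronglyMeasurable hint2.aestronglyMeasurable
    have hfge := factor_ge (hmeas b) (hbdd b) (hmean b) hlam
    have hfle := factor_le (hmeas b) (hbdd b) (hmean b) lam
    have hcast : ((b + 1 - a : ℕ) : ℝ) = ((b - a : ℕ) : ℝ) + 1 := by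
      rw [Nat.succ_sub hab]; push_cast; ring
    constructor
    · have h1 : Real.exp (-lam * (((b+1-a : ℕ):ℝ) * μ)) =
          Real.exp (-lam * (((b-a : ℕ):ℝ) * μ)) * Real.exp (-lam * μ) := by
        rw [← Real.exp_add, hcast]; ring_nf
      rw [hprod, h1]
      exact mul_le_mul IH.1 hfge (Real.exp_pos _).le (le_trans (Real.exp_pos _).le IH.1)
    · have h2 : (1 - μ + μ * Real.exp (-lam)) ^ (b+1-a : ℕ) =
          (1 - μ + μ * Real.exp (-lam)) ^ (b-a : ℕ) * (1 - μ + μ * Real.exp (-lam)) := by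
        rw [Nat.succ_sub hab, pow_succ]
      rw [hprod, h2]
      refine mul_le_mul IH.2 hfle (integral_nonneg fun ω => (Real.exp_pos _).le) (pow_nonneg hV.le _)



variable {Ω : Type*} [MeasurableSpace Ω] {P : Measure Ω} [IsProbabilityMeasure P]
variable {Y : ℕ → Ω → ℝ}

lemma Bset_meas (hmeas : ∀ i, Measurable (Y i)) (T : Finset ℕ) (μ g : ℝ) (t : ℕ) :
    MeasurableSet (Bset Y T μ g t) := by
  classical
  by_cases ht : t ∈ T
  · have : Bset Y T μ g t = {ω | ∑ j ∈ Finset.range t, Y j ω ≤ (t:ℝ) * μ - g} := by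
      ext ω; simp [mem_Bset, ht]
    rw [this]
    exact measurableSet_le (Finset.measurable_sum _ fun j _ => hmeas j) measurable_const
  · have : Bset Y T μ g t = ∅ := by ext ω; simp [mem_Bset, ht]
    rw [this]; exact MeasurableSet.empty

lemma Cset_meas (hmeas : ∀ i, Measurable (Y i)) (T : Finset ℕ) (μ g : ℝ) (n : ℕ) :
    MeasurableSet (Cset Y T μ g n) :=
  (Bset_meas hmeas T μ g n).diff
    (MeasurableSet.iUnion fun s => MeasurableSet.iUnion fun _ => Bset_meas hmeas T μ g s)

lemma core_key (hmeas : ∀ i, Measurable (Y i))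
    (hindep : iIndepFun Y P)
    (hbdd : ∀ i ω, Y i ω ∈ Icc (0:ℝ) 1) {μ : ℝ} (hμ : μ ∈ Ioo (0:ℝ) 1)
    (hmean : ∀ i, ∫ ω, Y i ω ∂P = μ) {lam : ℝ} (hlam : 0 ≤ lam)
    {M : ℕ} (g : ℝ) (T : Finset ℕ) (hT : ∀ t ∈ T, 0 < t ∧ t ≤ M) (n : ℕ) :
    (P (Cset Y T μ g n)).toReal * Real.exp (lam * g - lam * ((M:ℝ) * μ)) ≤
      ∫ ω in Cset Y T μ g n, Real.exp (-lam * ∑ j ∈ Finset.range M, Y j ω) ∂P := by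
  classical
  by_cases hn : n ∈ T
  · obtain ⟨hn0, hnM⟩ := hT n hn
    have hWint : Integrable (fun ω => Real.exp (-lam * ∑ j ∈ Finset.range M, Y j ω)) P :=
      integrable_exp_sum hmeas hbdd hlam (Finset.range M)
    have hWsplit : ∀ ω : Ω, Real.exp (-lam * ∑ j ∈ Finset.range M, Y j ω) =
        Real.exp (-lam * ∑ j ∈ Finset.range n, Y j ω) *
          Real.exp (-lam * ∑ j ∈ Finset.Ico n M, Y j ω) := by
      intro ω
      rw [← Real.exp_add]
      congr 1
      rw [Finset.range_eq_Ico, Finset.range_eq_Ico, ← Finset.sum_Ico_consecutive (fun j => Y j ω) (Nat.zero_le n) hnM]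
      ring
    have hZint : Integrable (fun ω => Real.exp (-lam * ∑ j ∈ Finset.Ico n M, Y j ω)) P :=
      integrable_exp_sum hmeas hbdd hlam (Finset.Ico n M)
    have hstep1 : ∫ ω in Cset Y T μ g n,
        Real.exp (-lam * ((n:ℝ) * μ - g)) * Real.exp (-lam * ∑ j ∈ Finset.Ico n M, Y j ω) ∂P ≤
        ∫ ω in Cset Y T μ g n, Real.exp (-lam * ∑ j ∈ Finset.range M, Y j ω) ∂P := by
      refine setIntegral_mono_on ((hZint.const_mul _).integrableOn) hWint.integrableOn
        (Cset_meas hmeas T μ g n) ?_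
      intro ω hω
      have hSn : ∑ j ∈ Finset.range n, Y j ω ≤ (n:ℝ) * μ - g := ((Cset_subset T μ g n) hω).2
      have h1 : (-lam) * ((n:ℝ) * μ - g) ≤ (-lam) * ∑ j ∈ Finset.range n, Y j ω :=
        mul_le_mul_of_nonpos_left hSn (neg_nonpos.2 hlam)
      rw [hWsplit ω]
      exact mul_le_mul_of_nonneg_right (Real.exp_le_exp.2 (by linarith)) (Real.exp_pos _).le
    have hXm : @Measurable Ω ℝ (⨆ j ∈ Set.Iio n, MeasurableSpace.comap (Y j) inferInstance) _
        ((Cset Y T μ g n).indicator (fun _ => (1:ℝ))) :=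
      measurable_const.indicator (Cset_meas_sup T μ g n)
    have hZm2 : @Measurable Ω ℝ (⨆ j ∈ Set.Ici n, MeasurableSpace.comap (Y j) inferInstance) _
        (fun ω => Real.exp (-lam * ∑ j ∈ Finset.Ico n M, Y j ω)) := by
      refine Real.measurable_exp.comp (Measurable.const_mul ?_ _)
      exact Finset.measurable_sum _ fun j hj => meas_sup (Finset.mem_Ico.1 hj).1
    have hIndXZ := indep_prefix hmeas hindep n hXm hZm2
    have hXint : Integrable ((Cset Y T μ g n).indicator (fun _ => (1:ℝ))) P := by
      refine integrable_of_bdd (measurable_const.indicator (Cset_meas hmeas T μ g n))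
        (C := 1) (fun ω => ?_)
      by_cases h : ω ∈ Cset Y T μ g n <;> simp [h]
    have hfact : ∫ ω in Cset Y T μ g n, Real.exp (-lam * ∑ j ∈ Finset.Ico n M, Y j ω) ∂P =
        (P (Cset Y T μ g n)).toReal *
          ∫ ω, Real.exp (-lam * ∑ j ∈ Finset.Ico n M, Y j ω) ∂P := by
      have h1 : ((Cset Y T μ g n).indicator (fun _ => (1:ℝ))) *
          (fun ω => Real.exp (-lam * ∑ j ∈ Finset.Ico n M, Y j ω)) =
          (Cset Y T μ g n).indicator (fun ω => Real.exp (-lam * ∑ j ∈ Finset.Ico n M, Y j ω)) := by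
        funext ω
        by_cases h : ω ∈ Cset Y T μ g n <;> simp [h]
      have h2 := hIndXZ.integral_mul_eq_mul_integral hXint.aestronglyMeasurable hZint.aestronglyMeasurable
      rw [h1] at h2
      rw [← integral_indicator (Cset_meas hmeas T μ g n), h2,
        integral_indicator (Cset_meas hmeas T μ g n)]
      congr 1
      rw [setIntegral_const]
      simp [Measure.real]
    have hstep4 : Real.exp (-lam * (((M - n : ℕ):ℝ) * μ)) ≤
        ∫ ω, Real.exp (-lam * ∑ j ∈ Finset.Ico n M, Y j ω) ∂P :=
      (expSum_bounds hmeas hindep hbdd hμ hmean hlam n M hnM).1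
    have hc : (0:ℝ) < Real.exp (-lam * ((n:ℝ) * μ - g)) := Real.exp_pos _
    have hcast : ((M - n : ℕ):ℝ) = (M:ℝ) - (n:ℝ) := by rw [Nat.cast_sub hnM]
    have hexp : Real.exp (lam * g - lam * ((M:ℝ) * μ)) =
        Real.exp (-lam * ((n:ℝ) * μ - g)) * Real.exp (-lam * (((M:ℝ) - (n:ℝ)) * μ)) := by
      rw [← Real.exp_add]
      ring_nf
    calc (P (Cset Y T μ g n)).toReal * Real.exp (lam * g - lam * ((M:ℝ) * μ))
        = Real.exp (-lam * ((n:ℝ) * μ - g)) *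
            ((P (Cset Y T μ g n)).toReal * Real.exp (-lam * (((M - n : ℕ):ℝ) * μ))) := by
          rw [hcast, hexp]
          ring
      _ ≤ Real.exp (-lam * ((n:ℝ) * μ - g)) *
            ((P (Cset Y T μ g n)).toReal *
              ∫ ω, Real.exp (-lam * ∑ j ∈ Finset.Ico n M, Y j ω) ∂P) :=
          mul_le_mul_of_nonneg_left
            (mul_le_mul_of_nonneg_left hstep4 ENNReal.toReal_nonneg) hc.le
      _ = ∫ ω in Cset Y T μ g n,
            Real.exp (-lam * ((n:ℝ) * μ - g)) *
              Real.exp (-lam * ∑ j ∈ Finset.Ico n M, Y j ω) ∂P := by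
          rw [integral_const_mul, hfact]
      _ ≤ _ := hstep1
  · have hBn : Bset Y T μ g n = ∅ := by ext ω; simp [mem_Bset, hn]
    have hCn : Cset Y T μ g n = ∅ :=
      Set.eq_empty_of_subset_empty (hBn ▸ Cset_subset T μ g n)
    rw [hCn]
    simp

lemma core (hmeas : ∀ i, Measurable (Y i))
    (hindep : iIndepFun Y P)
    (hbdd : ∀ i ω, Y i ω ∈ Icc (0:ℝ) 1) {μ : ℝ} (hμ : μ ∈ Ioo (0:ℝ) 1)
    (hmean : ∀ i, ∫ ω, Y i ω ∂P = μ) {lam : ℝ} (hlam : 0 ≤ lam)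
    {M : ℕ} (g : ℝ) (T : Finset ℕ) (hT : ∀ t ∈ T, 0 < t ∧ t ≤ M) :
    P (⋃ t ∈ T, {ω | ∑ j ∈ Finset.range t, Y j ω ≤ (t:ℝ) * μ - g}) ≤
      ENNReal.ofReal (Real.exp (lam * ((M:ℝ) * μ - g)) *
        (1 - μ + μ * Real.exp (-lam)) ^ M) := by
  classical
  have hV : 0 < 1 - μ + μ * Real.exp (-lam) := by
    have := Real.exp_pos (-lam); have h1 := hμ.1; have h2 := hμ.2; nlinarith
  have hWint : Integrable (fun ω => Real.exp (-lam * ∑ j ∈ Finset.range M, Y j ω)) P :=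
    integrable_exp_sum hmeas hbdd hlam (Finset.range M)
  have hWle : ∫ ω, Real.exp (-lam * ∑ j ∈ Finset.range M, Y j ω) ∂P ≤
      (1 - μ + μ * Real.exp (-lam)) ^ M := by
    have := (expSum_bounds hmeas hindep hbdd hμ hmean hlam 0 M (Nat.zero_le M)).2
    simpa only [← Finset.range_eq_Ico, Nat.sub_zero] using this
  have hUnionEq : (⋃ t ∈ T, {ω | ∑ j ∈ Finset.range t, Y j ω ≤ (t:ℝ) * μ - g}) =
      ⋃ n, Bset Y T μ g n := by
    ext ω
    rw [Set.mem_iUnion₂, Set.mem_iUnion]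
    constructor
    · rintro ⟨t, ht, h⟩; exact ⟨t, mem_Bset.2 ⟨ht, h⟩⟩
    · rintro ⟨t, ht⟩; exact ⟨t, (mem_Bset.1 ht).1, (mem_Bset.1 ht).2⟩
  have hsum : ∀ K : ℕ, ∑ n ∈ Finset.range K, (P (Cset Y T μ g n)).toReal ≤
      Real.exp (lam * ((M:ℝ) * μ - g)) * (1 - μ + μ * Real.exp (-lam)) ^ M := by
    intro K
    have h1 : ∑ n ∈ Finset.range K,
        ∫ ω in Cset Y T μ g n, Real.exp (-lam * ∑ j ∈ Finset.range M, Y j ω) ∂P ≤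
        ∫ ω, Real.exp (-lam * ∑ j ∈ Finset.range M, Y j ω) ∂P := by
      rw [← integral_biUnion_finset (Finset.range K) (fun i _ => Cset_meas hmeas T μ g i)
        ((Cset_disj T μ g).set_pairwise _) (fun i _ => hWint.integrableOn)]
      exact setIntegral_le_integral hWint
        (Filter.Eventually.of_forall fun ω => (Real.exp_pos _).le)
    have h2 : (∑ n ∈ Finset.range K, (P (Cset Y T μ g n)).toReal) *
        Real.exp (lam * g - lam * ((M:ℝ) * μ)) ≤
        ∑ n ∈ Finset.range K,
          ∫ ω in Cset Y T μ g n, Real.exp (-lam * ∑ j ∈ Finset.range M, Y j ω) ∂P := by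
      rw [Finset.sum_mul]
      exact Finset.sum_le_sum fun n _ => core_key hmeas hindep hbdd hμ hmean hlam g T hT n
    have hE : (0:ℝ) < Real.exp (lam * g - lam * ((M:ℝ) * μ)) := Real.exp_pos _
    have h4 := (le_div_iff₀ hE).2 ((h2.trans h1).trans hWle)
    calc (∑ n ∈ Finset.range K, (P (Cset Y T μ g n)).toReal) ≤
        (1 - μ + μ * Real.exp (-lam)) ^ M / Real.exp (lam * g - lam * ((M:ℝ) * μ)) := h4
      _ = Real.exp (lam * ((M:ℝ) * μ - g)) * (1 - μ + μ * Real.exp (-lam)) ^ M := by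
          rw [div_eq_mul_inv, ← Real.exp_neg]
          ring_nf
  rw [hUnionEq, ← Cset_cover T μ g, measure_iUnion (Cset_disj T μ g) (Cset_meas hmeas T μ g)]
  have hfin : ∀ s : Finset ℕ, ∑ n ∈ s, P (Cset Y T μ g n) ≤
      ENNReal.ofReal (Real.exp (lam * ((M:ℝ) * μ - g)) * (1 - μ + μ * Real.exp (-lam)) ^ M) := by
    intro s
    obtain ⟨K, hK⟩ := s.exists_nat_subset_range
    calc ∑ n ∈ s, P (Cset Y T μ g n) ≤ ∑ n ∈ Finset.range K, P (Cset Y T μ g n) :=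
          Finset.sum_le_sum_of_subset hK
      _ = ENNReal.ofReal (∑ n ∈ Finset.range K, (P (Cset Y T μ g n)).toReal) := by
          rw [ENNReal.ofReal_sum_of_nonneg (fun n _ => ENNReal.toReal_nonneg)]
          exact Finset.sum_congr rfl fun n _ =>
            (ENNReal.ofReal_toReal (measure_ne_top P _)).symm
      _ ≤ _ := ENNReal.ofReal_le_ofReal (hsum K)
  rw [ENNReal.tsum_eq_iSup_sum]
  exact iSup_le hfin



lemma key_block (hmeas : ∀ i, Measurable (Y i))
    (hindep : iIndepFun Y P)
    (hbdd : ∀ i ω, Y i ω ∈ Icc (0:ℝ) 1) {μ : ℝ} (hμ : μ ∈ Ioo (0:ℝ) 1)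
    (hmean : ∀ i, ∫ ω, Y i ω ∂P = μ)
    {N : ℕ} (hN1 : 1 ≤ N) (f z : ℕ → ℝ)
    (hz : ∀ t : ℕ, 0 < t →
      z t ∈ Set.Ioc (0:ℝ) μ ∧
      ((∃ y ∈ Set.Ioc (0:ℝ) μ,
          klBerR (μ - ((N:ℝ)/((N:ℝ)+1)) * y) μ = f t) →
        klBerR (μ - ((N:ℝ)/((N:ℝ)+1)) * z t) μ = f t) ∧
      ((¬ ∃ y ∈ Set.Ioc (0:ℝ) μ,
          klBerR (μ - ((N:ℝ)/((N:ℝ)+1)) * y) μ = f t) →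
        z t = μ))
    {M : ℕ} (hM : 0 < M) (L : ℝ) (T : Finset ℕ)
    (hT : ∀ t ∈ T, 0 < t ∧ t ≤ M ∧ (N:ℝ)/((N:ℝ)+1) * (M:ℝ) ≤ (t:ℝ) ∧ L ≤ (t:ℝ) * f t) :
    P (⋃ t ∈ T, {ω | (∑ j ∈ Finset.range t, Y j ω)/(t:ℝ) - μ < -(z t)}) ≤
      ENNReal.ofReal (Real.exp (-(((N:ℝ)+1)/(N:ℝ)) * L)) := by
  classical
  have hNpos : (0:ℝ) < N := by exact_mod_cast hN1
  have hN1pos : (0:ℝ) < (N:ℝ) + 1 := by linarith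
  set T' : Finset ℕ := T.filter (fun t => z t < μ) with hT'def
  have hsubU : (⋃ t ∈ T, {ω : Ω | (∑ j ∈ Finset.range t, Y j ω)/(t:ℝ) - μ < -(z t)}) ⊆
      ⋃ t ∈ T', {ω : Ω | (∑ j ∈ Finset.range t, Y j ω)/(t:ℝ) - μ < -(z t)} := by
    intro ω hω
    rw [Set.mem_iUnion₂] at hω ⊢
    obtain ⟨t, ht, hA⟩ := hω
    obtain ⟨htpos, -, -, -⟩ := hT t ht
    by_cases hzt : z t < μ
    · exact ⟨t, Finset.mem_filter.2 ⟨ht, hzt⟩, hA⟩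
    · exfalso
      have hzeq : z t = μ := le_antisymm ((hz t htpos).1.2) (not_lt.1 hzt)
      rw [Set.mem_setOf_eq, hzeq] at hA
      have hS : 0 ≤ (∑ j ∈ Finset.range t, Y j ω) := sum_Y_nonneg hbdd _ ω
      have htR : (0:ℝ) < (t:ℝ) := by exact_mod_cast htpos
      have : (∑ j ∈ Finset.range t, Y j ω)/(t:ℝ) < 0 := by linarith
      exact absurd this (not_lt.2 (div_nonneg hS htR.le))
  rcases Finset.eq_empty_or_nonempty T' with hT'e | hne
  · refine le_trans (measure_mono hsubU) ?_
    rw [hT'e]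
    simp
  obtain ⟨t0, ht0T', ht0min⟩ := T'.exists_min_image (fun t => (t:ℝ) * z t) hne
  have ht0T : t0 ∈ T := (Finset.mem_filter.1 ht0T').1
  have hzlt : z t0 < μ := (Finset.mem_filter.1 ht0T').2
  obtain ⟨h0pos, h0M, h0c, h0L⟩ := hT t0 ht0T
  have hzpos : 0 < z t0 := ((hz t0 h0pos).1).1
  have hMR : (0:ℝ) < (M:ℝ) := by exact_mod_cast hM
  have ht0R : (0:ℝ) < (t0:ℝ) := by exact_mod_cast h0pos
  set c : ℝ := (t0:ℝ) / (M:ℝ) with hcdef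
  have hc1 : c ≤ 1 := (div_le_one hMR).2 (by exact_mod_cast h0M)
  have hcpos : 0 < c := div_pos ht0R hMR
  set x : ℝ := μ - c * z t0 with hxdef
  have hczμ : c * z t0 < μ := lt_of_le_of_lt (by nlinarith : c * z t0 ≤ z t0) hzlt
  have hx0 : 0 < x := by rw [hxdef]; linarith
  have hxμ : x ≤ μ := by rw [hxdef]; nlinarith
  set g : ℝ := (t0:ℝ) * z t0 with hgdef
  have hg : (M:ℝ) * (μ - x) = g := by
    rw [hxdef, hgdef, hcdef]
    field_simp
    ring
  set lam : ℝ := Real.log ((1 - x) * μ / (x * (1 - μ))) with hlamdef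
  have hlam : 0 ≤ lam := lam_nonneg hx0 hxμ hμ.2
  have hBsub : (⋃ t ∈ T', {ω : Ω | (∑ j ∈ Finset.range t, Y j ω)/(t:ℝ) - μ < -(z t)}) ⊆
      ⋃ t ∈ T', {ω : Ω | ∑ j ∈ Finset.range t, Y j ω ≤ (t:ℝ) * μ - g} := by
    intro ω hω
    rw [Set.mem_iUnion₂] at hω ⊢
    obtain ⟨t, ht, hA⟩ := hω
    obtain ⟨htpos, -, -, -⟩ := hT t (Finset.mem_filter.1 ht).1
    have htR : (0:ℝ) < (t:ℝ) := by exact_mod_cast htpos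
    rw [Set.mem_setOf_eq] at hA
    have h1 : (∑ j ∈ Finset.range t, Y j ω)/(t:ℝ) < μ - z t := by linarith
    have h2 : ∑ j ∈ Finset.range t, Y j ω < (t:ℝ) * (μ - z t) := by
      rw [div_lt_iff₀ htR] at h1
      linarith [h1]
    have h3 : g ≤ (t:ℝ) * z t := ht0min t ht
    refine ⟨t, ht, ?_⟩
    rw [Set.mem_setOf_eq]
    nlinarith
  have hcore := core hmeas hindep hbdd hμ hmean hlam (M := M) g T'
    (fun t ht => ⟨(hT t (Finset.mem_filter.1 ht).1).1, (hT t (Finset.mem_filter.1 ht).1).2.1⟩)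
  have hchain : P (⋃ t ∈ T, {ω : Ω | (∑ j ∈ Finset.range t, Y j ω)/(t:ℝ) - μ < -(z t)}) ≤
      ENNReal.ofReal (Real.exp (lam * ((M:ℝ) * μ - g)) *
        (1 - μ + μ * Real.exp (-lam)) ^ M) :=
    le_trans (measure_mono (hsubU.trans hBsub)) hcore
  have heq : Real.exp (lam * ((M:ℝ) * μ - g)) * (1 - μ + μ * Real.exp (-lam)) ^ M =
      Real.exp (-((M:ℝ) * klBerR x μ)) := by
    rw [← hg]
    exact chernoff_exp_eq_kl hx0 hxμ hμ.1 hμ.2 M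
  -- now the kl lower bound
  set c₀ : ℝ := (N:ℝ)/((N:ℝ)+1) with hc₀def
  have hc₀pos : 0 < c₀ := div_pos hNpos hN1pos
  have hcc : c₀ ≤ c := by
    rw [hcdef, le_div_iff₀ hMR]
    exact h0c
  have hslope := kl_slope hμ.1 hμ.2 hzpos hzlt hc₀pos hcc hc1
  have hfeq : klBerR (μ - c₀ * z t0) μ = f t0 := by
    have hex : ∃ y ∈ Set.Ioc (0:ℝ) μ, klBerR (μ - c₀ * y) μ = f t0 := by
      by_contra hne'
      exact absurd ((hz t0 h0pos).2.2 hne') (ne_of_lt hzlt)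
    exact (hz t0 h0pos).2.1 hex
  have hratio : (M:ℝ) * (c / c₀) = ((N:ℝ)+1)/(N:ℝ) * (t0:ℝ) := by
    rw [hcdef, hc₀def]
    field_simp
  have hklbd : ((N:ℝ)+1)/(N:ℝ) * L ≤ (M:ℝ) * klBerR x μ := by
    have h1 : (M:ℝ) * ((c / c₀) * klBerR (μ - c₀ * z t0) μ) ≤ (M:ℝ) * klBerR x μ := by
      refine mul_le_mul_of_nonneg_left ?_ hMR.le
      rw [hxdef]
      exact hslope
    have h2 : (M:ℝ) * ((c / c₀) * klBerR (μ - c₀ * z t0) μ) =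
        ((N:ℝ)+1)/(N:ℝ) * ((t0:ℝ) * f t0) := by
      rw [hfeq, ← mul_assoc, hratio]
      ring
    rw [h2] at h1
    refine le_trans ?_ h1
    refine mul_le_mul_of_nonneg_left h0L (by positivity)
  refine le_trans hchain ?_
  rw [heq]
  refine ENNReal.ofReal_le_ofReal (Real.exp_le_exp.2 ?_)
  nlinarith [hklbd]


def Aset (Y : ℕ → Ω → ℝ) (μ : ℝ) (z : ℕ → ℝ) (t : ℕ) : Set Ω :=
  {ω | (∑ j ∈ Finset.range t, Y j ω)/(t:ℝ) - μ < -(z t)}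

lemma exp_neg_p_log {κ δ u q : ℝ} (hκ : 0 < κ) (hδ : 0 < δ) (hu : 0 < u) :
    Real.exp (-q * Real.log (κ * u / δ)) = (δ/κ) ^ q * u ^ (-q) := by
  have hv : (0:ℝ) < κ * u / δ := by positivity
  have h1 : Real.exp (-q * Real.log (κ * u / δ)) = (κ * u / δ) ^ (-q) := by
    rw [Real.rpow_def_of_pos hv]
    congr 1
    ring
  rw [h1, show κ * u / δ = (κ/δ) * u by ring,
    Real.mul_rpow (by positivity) hu.le,
    Real.rpow_neg (by positivity : (0:ℝ) ≤ κ/δ),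
    ← Real.inv_rpow (by positivity), inv_div]

lemma key_block' (hmeas : ∀ i, Measurable (Y i))
    (hindep : iIndepFun Y P)
    (hbdd : ∀ i ω, Y i ω ∈ Icc (0:ℝ) 1) {μ : ℝ} (hμ : μ ∈ Ioo (0:ℝ) 1)
    (hmean : ∀ i, ∫ ω, Y i ω ∂P = μ)
    {N : ℕ} (hN1 : 1 ≤ N) (f z : ℕ → ℝ)
    (hz : ∀ t : ℕ, 0 < t →
      z t ∈ Set.Ioc (0:ℝ) μ ∧
      ((∃ y ∈ Set.Ioc (0:ℝ) μ,
          klBerR (μ - ((N:ℝ)/((N:ℝ)+1)) * y) μ = f t) →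
        klBerR (μ - ((N:ℝ)/((N:ℝ)+1)) * z t) μ = f t) ∧
      ((¬ ∃ y ∈ Set.Ioc (0:ℝ) μ,
          klBerR (μ - ((N:ℝ)/((N:ℝ)+1)) * y) μ = f t) →
        z t = μ))
    {M : ℕ} (hM : 0 < M) (L : ℝ) (T : Finset ℕ)
    (hT : ∀ t ∈ T, 0 < t ∧ t ≤ M ∧ (N:ℝ)/((N:ℝ)+1) * (M:ℝ) ≤ (t:ℝ) ∧ L ≤ (t:ℝ) * f t) :
    P (⋃ t ∈ T, Aset Y μ z t) ≤
      ENNReal.ofReal (Real.exp (-(((N:ℝ)+1)/(N:ℝ)) * L)) :=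
  key_block hmeas hindep hbdd hμ hmean hN1 f z hz hM L T hT

lemma div_mul_cancel_aux {a b S : ℝ} (hS : S ≠ 0) (hb : b ≠ 0) : a / (b * S) * S = a / b := by
  field_simp


end WithMeas

set_option maxHeartbeats 1000000 in
/-- Theorem (anytime upper deviation bound, Theorem 2(ii)):
with probability at least `1 - δ`, `μ̂_t - μ ≥ -z_t` for all `t ≥ 1`. -/
theorem lil_klucb_anytime_lower_deviation
    {Ω : Type*} [MeasurableSpace Ω] (P : Measure Ω) [IsProbabilityMeasure P]
    (Y : ℕ → Ω → ℝ) (hmeas : ∀ i, Measurable (Y i))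
    (hindep : iIndepFun Y P)
    (hident : ∀ i, IdentDistrib (Y i) (Y 0) P P)
    (hbdd : ∀ i ω, Y i ω ∈ Set.Icc (0:ℝ) 1)
    (μ : ℝ) (hμ : μ ∈ Set.Ioo (0:ℝ) 1)
    (hmean : ∀ i, ∫ ω, Y i ω ∂P = μ)
    (δ : ℝ) (hδ : δ ∈ Set.Ioo (0:ℝ) 1)
    (l N : ℕ) (hN : N = 2 ^ l)
    (κ : ℝ)
    (hκ : κ = δ ^ ((1:ℝ)/((N:ℝ)+1)) *
      ((if l ≠ 0 then
          ∑ t ∈ Finset.Icc 1 N, (Real.logb 2 (2*(t:ℝ))) ^ (-(((N:ℝ)+1)/(N:ℝ)))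
        else 0)
        + (N:ℝ) * ∑' k : ℕ, ((k:ℝ) + (l:ℝ) + 1) ^ (-(((N:ℝ)+1)/(N:ℝ))))
        ^ ((N:ℝ)/((N:ℝ)+1)))
    (f : ℕ → ℝ)
    (hf : ∀ t : ℕ, f t = Real.log (κ * Real.logb 2 (2*(t:ℝ)) / δ) / (t:ℝ))
    (z : ℕ → ℝ)
    (hz : ∀ t : ℕ, 0 < t →
      z t ∈ Set.Ioc (0:ℝ) μ ∧
      ((∃ y ∈ Set.Ioc (0:ℝ) μ,
          klBerR (μ - ((N:ℝ)/((N:ℝ)+1)) * y) μ = f t) →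
        klBerR (μ - ((N:ℝ)/((N:ℝ)+1)) * z t) μ = f t) ∧
      ((¬ ∃ y ∈ Set.Ioc (0:ℝ) μ,
          klBerR (μ - ((N:ℝ)/((N:ℝ)+1)) * y) μ = f t) →
        z t = μ)) :
    P {ω | ∃ t : ℕ, 0 < t ∧
        (∑ j ∈ Finset.range t, Y j ω) / (t:ℝ) - μ < -(z t)} ≤ ENNReal.ofReal δ := by
  classical
  have hμ0 : (0:ℝ) < μ := hμ.1
  have hμ1 : μ < 1 := hμ.2
  have hδ0 : (0:ℝ) < δ := hδ.1
  have hN1 : 1 ≤ N := by rw [hN]; exact Nat.one_le_two_pow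
  have hNR : (0:ℝ) < (N:ℝ) := by exact_mod_cast hN1
  have hN1R : (0:ℝ) < (N:ℝ) + 1 := by linarith
  have hp1 : 1 < ((N:ℝ)+1)/(N:ℝ) := by rw [lt_div_iff₀ hNR]; linarith
  have hppos : (0:ℝ) < ((N:ℝ)+1)/(N:ℝ) := by linarith
  -- summability of the tail series
  have hsummable : Summable (fun k : ℕ => ((k:ℝ) + (l:ℝ) + 1) ^ (-(((N:ℝ)+1)/(N:ℝ)))) := by
    have h1 : Summable (fun n : ℕ => (n:ℝ) ^ (-(((N:ℝ)+1)/(N:ℝ)))) :=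
      Real.summable_nat_rpow.2 (by linarith)
    have h2 := (summable_nat_add_iff (f := fun n : ℕ => (n:ℝ) ^ (-(((N:ℝ)+1)/(N:ℝ)))) (l+1)).2 h1
    refine h2.congr fun k => ?_
    congr 1
    push_cast
    ring
  have hwpos : ∀ k : ℕ, (0:ℝ) < ((k:ℝ) + (l:ℝ) + 1) ^ (-(((N:ℝ)+1)/(N:ℝ))) :=
    fun k => Real.rpow_pos_of_pos (by positivity) _
  have htsumpos : 0 < ∑' k : ℕ, ((k:ℝ) + (l:ℝ) + 1) ^ (-(((N:ℝ)+1)/(N:ℝ))) :=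
    Summable.tsum_pos hsummable (fun i => (hwpos i).le) 0 (hwpos 0)
  have hfirst_nonneg : 0 ≤ (if l ≠ 0 then
      ∑ t ∈ Finset.Icc 1 N, (Real.logb 2 (2*(t:ℝ))) ^ (-(((N:ℝ)+1)/(N:ℝ))) else 0) := by
    split
    · refine Finset.sum_nonneg fun t ht => ?_
      refine Real.rpow_nonneg ?_ _
      refine Real.logb_nonneg one_lt_two ?_
      have h1 : (1:ℕ) ≤ t := (Finset.mem_Icc.1 ht).1
      have h2 : (1:ℝ) ≤ (t:ℝ) := by exact_mod_cast h1
      linarith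
    · exact le_refl 0
  have hSpos : 0 < (if l ≠ 0 then
      ∑ t ∈ Finset.Icc 1 N, (Real.logb 2 (2*(t:ℝ))) ^ (-(((N:ℝ)+1)/(N:ℝ))) else 0)
      + (N:ℝ) * ∑' k : ℕ, ((k:ℝ) + (l:ℝ) + 1) ^ (-(((N:ℝ)+1)/(N:ℝ))) :=
    add_pos_of_nonneg_of_pos hfirst_nonneg (mul_pos hNR htsumpos)
  have hκpos : 0 < κ := by
    rw [hκ]
    exact mul_pos (Real.rpow_pos_of_pos hδ0 _) (Real.rpow_pos_of_pos hSpos _)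
  -- per-time bound for small t
  have hbound1 : ∀ t ∈ Finset.Ico (1:ℕ) (2^l), P (Aset Y μ z t) ≤
      ENNReal.ofReal ((δ/κ) ^ (((N:ℝ)+1)/(N:ℝ)) *
        (Real.logb 2 (2*(t:ℝ))) ^ (-(((N:ℝ)+1)/(N:ℝ)))) := by
    intro t ht
    have htpos : 0 < t := by have := (Finset.mem_Ico.1 ht).1; omega
    have htR : (1:ℝ) ≤ (t:ℝ) := by exact_mod_cast htpos
    have htne : (t:ℝ) ≠ 0 := by positivity
    have hu : 0 < Real.logb 2 (2*(t:ℝ)) := Real.logb_pos one_lt_two (by linarith)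
    have hL := key_block' (P := P) hmeas hindep hbdd hμ hmean hN1 f z hz
      (M := t) htpos (Real.log (κ * Real.logb 2 (2*(t:ℝ)) / δ)) {t} ?_
    · rw [Finset.set_biUnion_singleton] at hL
      refine le_trans hL (le_of_eq ?_)
      congr 1
      exact exp_neg_p_log hκpos hδ0 hu
    · intro t' ht'
      rw [Finset.mem_singleton] at ht'
      subst ht'
      refine ⟨htpos, le_rfl, ?_, ?_⟩
      · have hc1 : (N:ℝ)/((N:ℝ)+1) ≤ 1 := by
          rw [div_le_one hN1R]; linarith
        nlinarith [htR]
      · rw [hf t']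
        refine le_of_eq ?_
        field_simp
  -- per-octave bound
  have hbound2 : ∀ k : ℕ,
      P (⋃ j ∈ Finset.range N,
          ⋃ t ∈ Finset.Ico (2^(l+k) + j*2^k) (2^(l+k) + (j+1)*2^k), Aset Y μ z t) ≤
      ENNReal.ofReal ((N:ℝ) * ((δ/κ) ^ (((N:ℝ)+1)/(N:ℝ)) *
        ((k:ℝ) + (l:ℝ) + 1) ^ (-(((N:ℝ)+1)/(N:ℝ))))) := by
    intro k
    have hupos : (0:ℝ) < (k:ℝ) + (l:ℝ) + 1 := by positivity
    have hblock : ∀ j ∈ Finset.range N,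
        P (⋃ t ∈ Finset.Ico (2^(l+k) + j*2^k) (2^(l+k) + (j+1)*2^k), Aset Y μ z t) ≤
        ENNReal.ofReal ((δ/κ) ^ (((N:ℝ)+1)/(N:ℝ)) *
          ((k:ℝ) + (l:ℝ) + 1) ^ (-(((N:ℝ)+1)/(N:ℝ)))) := by
      intro j hj
      have hX1 : 1 ≤ 2^(l+k) := Nat.one_le_two_pow
      have hQ1 : 1 ≤ 2^k := Nat.one_le_two_pow
      have hM : 0 < 2^(l+k) + (j+1)*2^k - 1 := by
        have : 1 ≤ (j+1)*2^k := le_trans hQ1 (Nat.le_mul_of_pos_left _ (Nat.succ_pos j))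
        omega
      have hL := key_block' (P := P) hmeas hindep hbdd hμ hmean hN1 f z hz
        (M := 2^(l+k) + (j+1)*2^k - 1) hM (Real.log (κ * ((k:ℝ) + (l:ℝ) + 1) / δ))
        (Finset.Ico (2^(l+k) + j*2^k) (2^(l+k) + (j+1)*2^k)) ?_
      · refine le_trans hL (le_of_eq ?_)
        congr 1
        exact exp_neg_p_log hκpos hδ0 hupos
      · intro t ht
        rw [Finset.mem_Ico] at ht
        obtain ⟨htlo, hthi⟩ := ht
        have htpos : 0 < t := lt_of_lt_of_le (by omega : 0 < 2^(l+k) + j*2^k) htlo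
        have htne : (t:ℝ) ≠ 0 := by
          have : (0:ℝ) < (t:ℝ) := by exact_mod_cast htpos
          positivity
        have htM : t ≤ 2^(l+k) + (j+1)*2^k - 1 := by omega
        refine ⟨htpos, htM, ?_, ?_⟩
        · -- (N/(N+1)) * M ≤ t
          have hA1 : 1 ≤ 2^(l+k) + (j+1)*2^k := by omega
          have hcastM : ((2^(l+k) + (j+1)*2^k - 1 : ℕ):ℝ) =
              ((2^(l+k) + (j+1)*2^k : ℕ):ℝ) - 1 := by
            rw [Nat.cast_sub hA1]
            norm_num
          have hNB : (N:ℝ) * ((2^k : ℕ):ℝ) = ((2^(l+k) : ℕ):ℝ) := by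
            have : N * 2^k = 2^(l+k) := by rw [hN, ← pow_add]
            exact_mod_cast this
          have hCA : ((2^(l+k) : ℕ):ℝ) ≤ ((2^(l+k) + j*2^k : ℕ):ℝ) := by
            exact_mod_cast Nat.le_add_right _ _
          have hAt : ((2^(l+k) + j*2^k : ℕ):ℝ) ≤ (t:ℝ) := by exact_mod_cast htlo
          have hsplit : ((2^(l+k) + (j+1)*2^k : ℕ):ℝ) =
              ((2^(l+k) + j*2^k : ℕ):ℝ) + ((2^k : ℕ):ℝ) := by
            push_cast
            ring
          rw [div_mul_eq_mul_div, div_le_iff₀ hN1R, hcastM, hsplit]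
          nlinarith [hNB, hCA, hAt, hNR.le]
        · -- L ≤ t * f t
          rw [hf t]
          have hcancel : (t:ℝ) * (Real.log (κ * Real.logb 2 (2*(t:ℝ)) / δ) / (t:ℝ)) =
              Real.log (κ * Real.logb 2 (2*(t:ℝ)) / δ) := by field_simp
          rw [hcancel]
          have hpow2 : ((2:ℝ))^((l+k+1 : ℕ)) ≤ 2*(t:ℝ) := by
            have h1 : (2:ℕ)^(l+k) ≤ t := le_trans (Nat.le_add_right _ _) htlo
            have h1R : ((2:ℝ))^((l+k : ℕ)) ≤ (t:ℝ) := by exact_mod_cast h1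
            calc ((2:ℝ))^((l+k+1 : ℕ)) = 2 * ((2:ℝ))^((l+k : ℕ)) := by rw [pow_succ]; ring
              _ ≤ 2*(t:ℝ) := by linarith
          have hlogb : (k:ℝ) + (l:ℝ) + 1 ≤ Real.logb 2 (2*(t:ℝ)) := by
            have h2 := Real.logb_le_logb_of_le one_lt_two
              (by positivity : (0:ℝ) < ((2:ℝ))^((l+k+1 : ℕ))) hpow2
            have h3 : Real.logb 2 (((2:ℝ))^((l+k+1 : ℕ))) = ((l+k+1 : ℕ):ℝ) := by
              rw [Real.logb_pow, Real.logb_self_eq_one one_lt_two, mul_one]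
            rw [h3] at h2
            refine le_trans (le_of_eq ?_) h2
            push_cast
            ring
          refine Real.log_le_log (by positivity) ?_
          gcongr
    calc P (⋃ j ∈ Finset.range N,
          ⋃ t ∈ Finset.Ico (2^(l+k) + j*2^k) (2^(l+k) + (j+1)*2^k), Aset Y μ z t) ≤
        ∑ j ∈ Finset.range N,
          P (⋃ t ∈ Finset.Ico (2^(l+k) + j*2^k) (2^(l+k) + (j+1)*2^k), Aset Y μ z t) :=
          measure_biUnion_finset_le _ _
      _ ≤ ∑ _j ∈ Finset.range N, ENNReal.ofReal ((δ/κ) ^ (((N:ℝ)+1)/(N:ℝ)) *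
            ((k:ℝ) + (l:ℝ) + 1) ^ (-(((N:ℝ)+1)/(N:ℝ)))) := Finset.sum_le_sum hblock
      _ = (N:ℕ) * ENNReal.ofReal ((δ/κ) ^ (((N:ℝ)+1)/(N:ℝ)) *
            ((k:ℝ) + (l:ℝ) + 1) ^ (-(((N:ℝ)+1)/(N:ℝ)))) := by
          rw [Finset.sum_const, Finset.card_range, nsmul_eq_mul]
      _ = ENNReal.ofReal ((N:ℝ) * ((δ/κ) ^ (((N:ℝ)+1)/(N:ℝ)) *
            ((k:ℝ) + (l:ℝ) + 1) ^ (-(((N:ℝ)+1)/(N:ℝ))))) := by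
          rw [ENNReal.ofReal_mul (Nat.cast_nonneg N), ENNReal.ofReal_natCast]
  -- coverage
  have hEdecomp : {ω : Ω | ∃ t : ℕ, 0 < t ∧
      (∑ j ∈ Finset.range t, Y j ω) / (t:ℝ) - μ < -(z t)} ⊆
      (⋃ t ∈ Finset.Ico (1:ℕ) (2^l), Aset Y μ z t) ∪
      ⋃ k : ℕ, ⋃ j ∈ Finset.range N,
        ⋃ t ∈ Finset.Ico (2^(l+k) + j*2^k) (2^(l+k) + (j+1)*2^k), Aset Y μ z t := by
    intro ω hω
    obtain ⟨t, htpos, hq⟩ := hω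
    have hqA : ω ∈ Aset Y μ z t := hq
    rcases lt_or_ge t (2^l) with hlt | hge
    · exact Or.inl (Set.mem_iUnion₂.2 ⟨t, Finset.mem_Ico.2 ⟨htpos, hlt⟩, hqA⟩)
    · right
      have htne : t ≠ 0 := htpos.ne'
      obtain ⟨k, hk⟩ : ∃ k, l + k = Nat.log 2 t :=
        ⟨Nat.log 2 t - l, by
          have := (Nat.le_log_iff_pow_le one_lt_two htne).2 hge
          omega⟩
      have h1 : 2^(l+k) ≤ t := by rw [hk]; exact Nat.pow_log_le_self 2 htne
      have h2 : t < 2^(l+k) * 2 := by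
        have h3 := Nat.lt_pow_succ_log_self one_lt_two t
        rw [← hk] at h3
        rw [pow_succ] at h3
        exact h3
      have hQpos : 0 < 2^k := pow_pos (by norm_num : (0:ℕ) < 2) k
      have hjlt : (t - 2^(l+k)) / 2^k < N := by
        rw [hN, Nat.div_lt_iff_lt_mul hQpos, ← pow_add]
        omega
      have hlow : 2^(l+k) + ((t - 2^(l+k)) / 2^k) * 2^k ≤ t := by
        have h4 : ((t - 2^(l+k)) / 2^k) * 2^k ≤ t - 2^(l+k) := Nat.div_mul_le_self _ _
        omega
      have hhigh : t < 2^(l+k) + (((t - 2^(l+k)) / 2^k) + 1) * 2^k := by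
        have h5 : 2^k * ((t - 2^(l+k)) / 2^k) + (t - 2^(l+k)) % 2^k = t - 2^(l+k) :=
          Nat.div_add_mod _ _
        have h6 : (t - 2^(l+k)) % 2^k < 2^k := Nat.mod_lt _ hQpos
        have h7 : (((t - 2^(l+k)) / 2^k) + 1) * 2^k =
            2^k * ((t - 2^(l+k)) / 2^k) + 2^k := by ring
        omega
      refine Set.mem_iUnion.2 ⟨k, Set.mem_iUnion₂.2 ⟨(t - 2^(l+k)) / 2^k,
        Finset.mem_range.2 hjlt, Set.mem_iUnion₂.2 ⟨t, Finset.mem_Ico.2 ⟨hlow, hhigh⟩, hqA⟩⟩⟩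
  -- combine
  have hB1nn : (0:ℝ) ≤ ∑ t ∈ Finset.Ico (1:ℕ) (2^l), (δ/κ) ^ (((N:ℝ)+1)/(N:ℝ)) *
      (Real.logb 2 (2*(t:ℝ))) ^ (-(((N:ℝ)+1)/(N:ℝ))) := by
    refine Finset.sum_nonneg fun t ht => ?_
    have htpos : 0 < t := by have := (Finset.mem_Ico.1 ht).1; omega
    have htR : (1:ℝ) ≤ (t:ℝ) := by exact_mod_cast htpos
    have hu : 0 < Real.logb 2 (2*(t:ℝ)) := Real.logb_pos one_lt_two (by linarith)
    positivity
  have hsummable2 : Summable (fun k : ℕ => (N:ℝ) * ((δ/κ) ^ (((N:ℝ)+1)/(N:ℝ)) *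
      ((k:ℝ) + (l:ℝ) + 1) ^ (-(((N:ℝ)+1)/(N:ℝ))))) :=
    (hsummable.mul_left _).mul_left _
  have hB2nn : ∀ k : ℕ, (0:ℝ) ≤ (N:ℝ) * ((δ/κ) ^ (((N:ℝ)+1)/(N:ℝ)) *
      ((k:ℝ) + (l:ℝ) + 1) ^ (-(((N:ℝ)+1)/(N:ℝ)))) := by
    intro k
    have := (hwpos k).le
    positivity
  have hstep : P {ω : Ω | ∃ t : ℕ, 0 < t ∧
      (∑ j ∈ Finset.range t, Y j ω) / (t:ℝ) - μ < -(z t)} ≤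
      ENNReal.ofReal ((∑ t ∈ Finset.Ico (1:ℕ) (2^l), (δ/κ) ^ (((N:ℝ)+1)/(N:ℝ)) *
        (Real.logb 2 (2*(t:ℝ))) ^ (-(((N:ℝ)+1)/(N:ℝ)))) +
        ∑' k : ℕ, (N:ℝ) * ((δ/κ) ^ (((N:ℝ)+1)/(N:ℝ)) *
          ((k:ℝ) + (l:ℝ) + 1) ^ (-(((N:ℝ)+1)/(N:ℝ))))) := by
    calc P {ω : Ω | ∃ t : ℕ, 0 < t ∧
        (∑ j ∈ Finset.range t, Y j ω) / (t:ℝ) - μ < -(z t)} ≤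
        P ((⋃ t ∈ Finset.Ico (1:ℕ) (2^l), Aset Y μ z t) ∪
          ⋃ k : ℕ, ⋃ j ∈ Finset.range N,
            ⋃ t ∈ Finset.Ico (2^(l+k) + j*2^k) (2^(l+k) + (j+1)*2^k), Aset Y μ z t) :=
          measure_mono hEdecomp
      _ ≤ P (⋃ t ∈ Finset.Ico (1:ℕ) (2^l), Aset Y μ z t) +
          P (⋃ k : ℕ, ⋃ j ∈ Finset.range N,
            ⋃ t ∈ Finset.Ico (2^(l+k) + j*2^k) (2^(l+k) + (j+1)*2^k), Aset Y μ z t) :=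
          measure_union_le _ _
      _ ≤ (∑ t ∈ Finset.Ico (1:ℕ) (2^l), P (Aset Y μ z t)) +
          ∑' k : ℕ, P (⋃ j ∈ Finset.range N,
            ⋃ t ∈ Finset.Ico (2^(l+k) + j*2^k) (2^(l+k) + (j+1)*2^k), Aset Y μ z t) :=
          add_le_add (measure_biUnion_finset_le _ _) (measure_iUnion_le _)
      _ ≤ (∑ t ∈ Finset.Ico (1:ℕ) (2^l), ENNReal.ofReal ((δ/κ) ^ (((N:ℝ)+1)/(N:ℝ)) *
            (Real.logb 2 (2*(t:ℝ))) ^ (-(((N:ℝ)+1)/(N:ℝ))))) +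
          ∑' k : ℕ, ENNReal.ofReal ((N:ℝ) * ((δ/κ) ^ (((N:ℝ)+1)/(N:ℝ)) *
            ((k:ℝ) + (l:ℝ) + 1) ^ (-(((N:ℝ)+1)/(N:ℝ))))) :=
          add_le_add (Finset.sum_le_sum hbound1) (ENNReal.tsum_le_tsum hbound2)
      _ = ENNReal.ofReal (∑ t ∈ Finset.Ico (1:ℕ) (2^l), (δ/κ) ^ (((N:ℝ)+1)/(N:ℝ)) *
            (Real.logb 2 (2*(t:ℝ))) ^ (-(((N:ℝ)+1)/(N:ℝ)))) +
          ENNReal.ofReal (∑' k : ℕ, (N:ℝ) * ((δ/κ) ^ (((N:ℝ)+1)/(N:ℝ)) *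
            ((k:ℝ) + (l:ℝ) + 1) ^ (-(((N:ℝ)+1)/(N:ℝ))))) := by
          rw [ENNReal.ofReal_sum_of_nonneg (fun t ht => by
              have htpos : 0 < t := by have := (Finset.mem_Ico.1 ht).1; omega
              have htR : (1:ℝ) ≤ (t:ℝ) := by exact_mod_cast htpos
              have hu : 0 < Real.logb 2 (2*(t:ℝ)) := Real.logb_pos one_lt_two (by linarith)
              positivity),
            ENNReal.ofReal_tsum_of_nonneg hB2nn hsummable2]
      _ = ENNReal.ofReal _ := (ENNReal.ofReal_add hB1nn (tsum_nonneg hB2nn)).symm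
  refine le_trans hstep (ENNReal.ofReal_le_ofReal ?_)
  -- final numeric bound
  have hIco : (∑ t ∈ Finset.Ico (1:ℕ) (2^l), (Real.logb 2 (2*(t:ℝ))) ^ (-(((N:ℝ)+1)/(N:ℝ)))) ≤
      (if l ≠ 0 then
        ∑ t ∈ Finset.Icc 1 N, (Real.logb 2 (2*(t:ℝ))) ^ (-(((N:ℝ)+1)/(N:ℝ))) else 0) := by
    by_cases hl0 : l = 0
    · subst hl0
      simp
    · rw [if_pos hl0]
      refine Finset.sum_le_sum_of_subset_of_nonneg ?_ ?_
      · intro t ht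
        rw [Finset.mem_Ico] at ht
        rw [Finset.mem_Icc, hN]
        omega
      · intro t ht _
        refine Real.rpow_nonneg (Real.logb_nonneg one_lt_two ?_) _
        have h1 : (1:ℕ) ≤ t := (Finset.mem_Icc.1 ht).1
        have h2 : (1:ℝ) ≤ (t:ℝ) := by exact_mod_cast h1
        linarith
  have hSne : ((if l ≠ 0 then
      ∑ t ∈ Finset.Icc 1 N, (Real.logb 2 (2*(t:ℝ))) ^ (-(((N:ℝ)+1)/(N:ℝ))) else 0)
      + (N:ℝ) * ∑' k : ℕ, ((k:ℝ) + (l:ℝ) + 1) ^ (-(((N:ℝ)+1)/(N:ℝ)))) ≠ 0 := hSpos.ne'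
  have hκp : κ ^ (((N:ℝ)+1)/(N:ℝ)) = δ^((1:ℝ)/(N:ℝ)) *
      ((if l ≠ 0 then
        ∑ t ∈ Finset.Icc 1 N, (Real.logb 2 (2*(t:ℝ))) ^ (-(((N:ℝ)+1)/(N:ℝ))) else 0)
        + (N:ℝ) * ∑' k : ℕ, ((k:ℝ) + (l:ℝ) + 1) ^ (-(((N:ℝ)+1)/(N:ℝ)))) := by
    rw [hκ, Real.mul_rpow (Real.rpow_nonneg hδ0.le _) (Real.rpow_nonneg hSpos.le _),
      ← Real.rpow_mul hδ0.le, ← Real.rpow_mul hSpos.le,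
      show ((1:ℝ)/((N:ℝ)+1)) * (((N:ℝ)+1)/(N:ℝ)) = 1/(N:ℝ) by
        field_simp,
      show ((N:ℝ)/((N:ℝ)+1)) * (((N:ℝ)+1)/(N:ℝ)) = (1:ℝ) by
        field_simp,
      Real.rpow_one]
  have hfinalEq : (δ/κ) ^ (((N:ℝ)+1)/(N:ℝ)) *
      ((if l ≠ 0 then
        ∑ t ∈ Finset.Icc 1 N, (Real.logb 2 (2*(t:ℝ))) ^ (-(((N:ℝ)+1)/(N:ℝ))) else 0)
        + (N:ℝ) * ∑' k : ℕ, ((k:ℝ) + (l:ℝ) + 1) ^ (-(((N:ℝ)+1)/(N:ℝ)))) = δ := by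
    rw [Real.div_rpow hδ0.le hκpos.le, hκp,
      div_mul_cancel_aux hSne (Real.rpow_pos_of_pos hδ0 _).ne']
    rw [← Real.rpow_sub hδ0,
      show (((N:ℝ)+1)/(N:ℝ) - (1:ℝ)/(N:ℝ)) = 1 by
        rw [div_sub_div_same]
        rw [add_sub_cancel_right]
        exact div_self hNR.ne',
      Real.rpow_one]
  calc (∑ t ∈ Finset.Ico (1:ℕ) (2^l), (δ/κ) ^ (((N:ℝ)+1)/(N:ℝ)) *
        (Real.logb 2 (2*(t:ℝ))) ^ (-(((N:ℝ)+1)/(N:ℝ)))) +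
      ∑' k : ℕ, (N:ℝ) * ((δ/κ) ^ (((N:ℝ)+1)/(N:ℝ)) *
        ((k:ℝ) + (l:ℝ) + 1) ^ (-(((N:ℝ)+1)/(N:ℝ)))) =
      (δ/κ) ^ (((N:ℝ)+1)/(N:ℝ)) *
        ((∑ t ∈ Finset.Ico (1:ℕ) (2^l), (Real.logb 2 (2*(t:ℝ))) ^ (-(((N:ℝ)+1)/(N:ℝ)))) +
          (N:ℝ) * ∑' k : ℕ, ((k:ℝ) + (l:ℝ) + 1) ^ (-(((N:ℝ)+1)/(N:ℝ)))) := by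
        rw [tsum_mul_left, tsum_mul_left, ← Finset.mul_sum]
        ring
    _ ≤ (δ/κ) ^ (((N:ℝ)+1)/(N:ℝ)) *
        ((if l ≠ 0 then
          ∑ t ∈ Finset.Icc 1 N, (Real.logb 2 (2*(t:ℝ))) ^ (-(((N:ℝ)+1)/(N:ℝ))) else 0)
          + (N:ℝ) * ∑' k : ℕ, ((k:ℝ) + (l:ℝ) + 1) ^ (-(((N:ℝ)+1)/(N:ℝ)))) := by
        refine mul_le_mul_of_nonneg_left (add_le_add hIco le_rfl)
          (Real.rpow_nonneg (by positivity) _)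
    _ = δ := hfinalEq
end

section
/- The sequence t ↦ t·z_t is nondecreasing on ℕ. -/
open Set

set_option maxHeartbeats 1000000

noncomputable def klG (μ x : ℝ) : ℝ :=
  (μ + x) * (Real.log (μ + x) - Real.log μ)
    + (1 - μ - x) * (Real.log (1 - μ - x) - Real.log (1 - μ))

lemma klG_zero (μ : ℝ) : klG μ 0 = 0 := by simp [klG]

lemma klG_hasDerivAt (μ x : ℝ) (h1 : 0 < μ + x) (h2 : 0 < 1 - μ - x) :
    HasDerivAt (klG μ)
      (Real.log (μ + x) - Real.log μ - Real.log (1 - μ - x) + Real.log (1 - μ)) x := by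
  have ha : HasDerivAt (fun y : ℝ => μ + y) 1 x := by
    simpa using (hasDerivAt_id x).const_add μ
  have hb : HasDerivAt (fun y : ℝ => 1 - μ - y) (-1) x := by
    simpa using ((hasDerivAt_id x).const_sub (1 - μ))
  have hla : HasDerivAt (fun y : ℝ => Real.log (μ + y)) ((μ + x)⁻¹) x := by
    have := (Real.hasDerivAt_log h1.ne').comp x ha
    rw [mul_one] at this
    exact this
  have hlb : HasDerivAt (fun y : ℝ => Real.log (1 - μ - y)) (-(1 - μ - x)⁻¹) x := by
    have := (Real.hasDerivAt_log h2.ne').comp x hb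
    rw [mul_neg_one] at this
    exact this
  have hA : HasDerivAt (fun y : ℝ => (μ + y) * (Real.log (μ + y) - Real.log μ))
      (1 * (Real.log (μ + x) - Real.log μ) + (μ + x) * (μ + x)⁻¹) x :=
    ha.mul (hla.sub_const _)
  have hB : HasDerivAt (fun y : ℝ => (1 - μ - y) * (Real.log (1 - μ - y) - Real.log (1 - μ)))
      ((-1) * (Real.log (1 - μ - x) - Real.log (1 - μ)) + (1 - μ - x) * (-(1 - μ - x)⁻¹)) x :=
    hb.mul (hlb.sub_const _)
  have := hA.add hB
  rw [mul_inv_cancel₀ h1.ne'] at this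
  rw [mul_neg, mul_inv_cancel₀ h2.ne'] at this
  refine this.congr_deriv ?_
  ring

lemma klBerR_eq_klG (μ x : ℝ) (hμ : 0 < μ) (h1 : 0 < μ + x) (h2 : 0 < 1 - μ - x)
    (hμ1 : μ < 1) : klBerR (μ + x) μ = klG μ x := by
  unfold klBerR klG
  have e : (1:ℝ) - (μ + x) = 1 - μ - x := by ring
  rw [e, Real.log_div h1.ne' hμ.ne', Real.log_div h2.ne' (by linarith : (0:ℝ) < 1 - μ).ne']

lemma klG_props (μ b : ℝ) (hμ : 0 < μ) (hb : 0 < b) (hb' : b < 1 - μ) :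
    StrictMonoOn (klG μ) (Set.Icc 0 b) ∧ ConvexOn ℝ (Set.Icc 0 b) (klG μ) ∧
      ContinuousOn (klG μ) (Set.Icc 0 b) := by
  have key : ∀ x ∈ Set.Icc (0:ℝ) b, 0 < μ + x ∧ 0 < 1 - μ - x := by
    rintro x ⟨hx0, hxb⟩; constructor <;> linarith
  have hcont : ContinuousOn (klG μ) (Set.Icc 0 b) := fun x hx =>
    ((klG_hasDerivAt μ x (key x hx).1 (key x hx).2).continuousAt).continuousWithinAt
  have hderiv : ∀ x ∈ Set.Ioo (0:ℝ) b, deriv (klG μ) x =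
      Real.log (μ + x) - Real.log μ - Real.log (1 - μ - x) + Real.log (1 - μ) := by
    intro x hx
    have hx' : x ∈ Set.Icc (0:ℝ) b := Set.Ioo_subset_Icc_self hx
    exact (klG_hasDerivAt μ x (key x hx').1 (key x hx').2).deriv
  have hmono : StrictMonoOn (klG μ) (Set.Icc 0 b) := by
    apply strictMonoOn_of_deriv_pos (convex_Icc 0 b) hcont
    intro x hx
    rw [interior_Icc] at hx
    rw [hderiv x hx]
    have l1 : Real.log μ < Real.log (μ + x) := Real.log_lt_log hμ (by linarith [hx.1])
    have l2 : Real.log (1 - μ - x) < Real.log (1 - μ) :=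
      Real.log_lt_log (by linarith [hx.2]) (by linarith [hx.1])
    linarith
  refine ⟨hmono, ?_, hcont⟩
  apply MonotoneOn.convexOn_of_deriv (convex_Icc 0 b) hcont
  · rw [interior_Icc]
    intro x hx
    have hx' : x ∈ Set.Icc (0:ℝ) b := Set.Ioo_subset_Icc_self hx
    exact ((klG_hasDerivAt μ x (key x hx').1 (key x hx').2).differentiableAt).differentiableWithinAt
  · rw [interior_Icc]
    intro x hx y hy hxy
    rw [hderiv x hx, hderiv y hy]
    have l1 : Real.log (μ + x) ≤ Real.log (μ + y) :=
      Real.log_le_log (by linarith [hx.1]) (by linarith)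
    have l2 : Real.log (1 - μ - y) ≤ Real.log (1 - μ - x) :=
      Real.log_le_log (by linarith [hy.2]) (by linarith)
    linarith

/-- Lemma: the sequence `t ↦ t·z_t` is nondecreasing on `ℕ`. -/
theorem lil_klucb_t_mul_z_nondecreasing
    (μ : ℝ) (hμ : μ ∈ Set.Ioo (0:ℝ) 1)
    (δ : ℝ) (hδ : δ ∈ Set.Ioo (0:ℝ) 1)
    (l N : ℕ) (hN : N = 2 ^ l)
    (κ : ℝ)
    (hκ : κ = δ ^ ((1:ℝ)/((N:ℝ)+1)) *
      ((if l ≠ 0 then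
          ∑ t ∈ Finset.Icc 1 N, (Real.logb 2 (2*(t:ℝ))) ^ (-(((N:ℝ)+1)/(N:ℝ)))
        else 0)
        + (N:ℝ) * ∑' k : ℕ, ((k:ℝ) + (l:ℝ) + 1) ^ (-(((N:ℝ)+1)/(N:ℝ))))
        ^ ((N:ℝ)/((N:ℝ)+1)))
    (f : ℕ → ℝ)
    (hf : ∀ t : ℕ, f t = Real.log (κ * Real.logb 2 (2*(t:ℝ)) / δ) / (t:ℝ))
    (z : ℕ → ℝ)
    (hz : ∀ t : ℕ, 0 < t →
      z t ∈ Set.Ioc (0:ℝ) (1 - μ) ∧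
      ((∃ y ∈ Set.Ioc (0:ℝ) (1 - μ),
          klBerR (μ + ((N:ℝ)/((N:ℝ)+1)) * y) μ = f t) →
        klBerR (μ + ((N:ℝ)/((N:ℝ)+1)) * z t) μ = f t) ∧
      ((¬ ∃ y ∈ Set.Ioc (0:ℝ) (1 - μ),
          klBerR (μ + ((N:ℝ)/((N:ℝ)+1)) * y) μ = f t) →
        z t = 1 - μ)) :
    ∀ s t : ℕ, 0 < s → s ≤ t → (s:ℝ) * z s ≤ (t:ℝ) * z t := by

  obtain ⟨hμ0, hμ1⟩ := hμ
  obtain ⟨hδ0, hδ1⟩ := hδ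
  have h1μ : (0:ℝ) < 1 - μ := by linarith
  set c : ℝ := (N:ℝ)/((N:ℝ)+1) with hc
  have hN1 : 1 ≤ N := hN ▸ Nat.one_le_two_pow
  have hNpos : (0:ℝ) < N := by exact_mod_cast hN1
  have hN1R : (1:ℝ) ≤ N := by exact_mod_cast hN1
  have hc0 : 0 < c := div_pos hNpos (by linarith)
  have hc1 : c < 1 := by
    rw [hc, div_lt_one (by linarith)]; linarith
  set b : ℝ := c * (1 - μ) with hbdef
  have hb0 : 0 < b := mul_pos hc0 h1μ
  have hb1 : b < 1 - μ := by nlinarith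
  obtain ⟨Gmono, Gconv, Gcont⟩ := klG_props μ b hμ0 hb0 hb1
  -- the sum S is at least 1
  set q : ℝ := -(((N:ℝ)+1)/(N:ℝ)) with hq
  have hqlt : q < -1 := by
    have : (1:ℝ) < ((N:ℝ)+1)/(N:ℝ) := (one_lt_div hNpos).mpr (by linarith)
    rw [hq]; linarith
  have hsummable : Summable (fun k : ℕ => ((k:ℝ) + (l:ℝ) + 1) ^ q) := by
    have he : (fun k : ℕ => ((k:ℝ) + (l:ℝ) + 1) ^ q)
        = (fun n : ℕ => (n:ℝ) ^ q) ∘ (fun k : ℕ => k + (l+1)) := by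
      funext k; simp only [Function.comp]; push_cast; ring_nf
    rw [he]
    exact (summable_nat_add_iff (l+1)).mpr (Real.summable_nat_rpow.mpr hqlt)
  set S : ℝ := (if l ≠ 0 then
          ∑ t ∈ Finset.Icc 1 N, (Real.logb 2 (2*(t:ℝ))) ^ q
        else 0)
        + (N:ℝ) * ∑' k : ℕ, ((k:ℝ) + (l:ℝ) + 1) ^ q with hSdef
  have htsum_nonneg : 0 ≤ ∑' k : ℕ, ((k:ℝ) + (l:ℝ) + 1) ^ q :=
    tsum_nonneg fun k => Real.rpow_nonneg (by positivity) _
  have hS1 : 1 ≤ S := by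
    by_cases hl : l = 0
    · subst hl
      have hN' : N = 1 := by rw [hN]; norm_num
      have hterm : (1:ℝ) ≤ ∑' k : ℕ, ((k:ℝ) + ((0:ℕ):ℝ) + 1) ^ q := by
        have := hsummable.le_tsum 0 (fun i _ => Real.rpow_nonneg (by positivity) _)
        simpa using this
      rw [hSdef]
      simp only [ne_eq, not_true_eq_false, if_false]
      nlinarith [hterm, hN1R, htsum_nonneg]
    · have hterm : (1:ℝ) ≤ ∑ t ∈ Finset.Icc 1 N, (Real.logb 2 (2*(t:ℝ))) ^ q := by
        have h1mem : 1 ∈ Finset.Icc 1 N := Finset.mem_Icc.mpr ⟨le_refl 1, hN1⟩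
        have := Finset.single_le_sum
          (f := fun t : ℕ => (Real.logb 2 (2*(t:ℝ))) ^ q)
          (fun i hi => Real.rpow_nonneg (Real.logb_nonneg (by norm_num)
            (by
              have : 1 ≤ i := (Finset.mem_Icc.mp hi).1
              have : (1:ℝ) ≤ i := by exact_mod_cast this
              linarith)) _) h1mem
        simpa [Real.logb_self_eq_one (by norm_num : (1:ℝ) < 2)] using this
      rw [hSdef]
      simp only [hl, ne_eq, not_false_eq_true, if_true]
      nlinarith
  have hS0 : 0 < S := lt_of_lt_of_le one_pos hS1
  -- κ > δ > 0
  have hκS : κ = δ ^ ((1:ℝ)/((N:ℝ)+1)) * S ^ ((N:ℝ)/((N:ℝ)+1)) := by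
    rw [hκ, hSdef]
  have hδκ : δ < κ := by
    rw [hκS]
    have hexp : (1:ℝ)/((N:ℝ)+1) + (N:ℝ)/((N:ℝ)+1) = 1 := by
      field_simp
      ring
    calc δ = δ ^ ((1:ℝ)/((N:ℝ)+1)) * δ ^ ((N:ℝ)/((N:ℝ)+1)) := by
          rw [← Real.rpow_add hδ0, hexp, Real.rpow_one]
      _ < δ ^ ((1:ℝ)/((N:ℝ)+1)) * S ^ ((N:ℝ)/((N:ℝ)+1)) := by
          apply mul_lt_mul_of_pos_left _ (Real.rpow_pos_of_pos hδ0 _)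
          exact Real.rpow_lt_rpow hδ0.le (lt_of_lt_of_le hδ1 hS1)
            (div_pos hNpos (by linarith))
  have hκ0 : 0 < κ := lt_trans hδ0 hδκ
  -- basic facts about f
  have hlogb1 : ∀ u : ℕ, 0 < u → 1 ≤ Real.logb 2 (2*(u:ℝ)) := by
    intro u hu
    have hu1 : (1:ℝ) ≤ u := by exact_mod_cast hu
    calc (1:ℝ) = Real.logb 2 2 := (Real.logb_self_eq_one (by norm_num)).symm
      _ ≤ Real.logb 2 (2*(u:ℝ)) :=
        (Real.logb_le_logb (by norm_num) (by norm_num) (by linarith)).mpr (by linarith)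
  have hA1 : ∀ u : ℕ, 0 < u → 1 < κ * Real.logb 2 (2*(u:ℝ)) / δ := by
    intro u hu
    rw [one_lt_div hδ0]
    calc δ < κ := hδκ
      _ = κ * 1 := (mul_one κ).symm
      _ ≤ κ * Real.logb 2 (2*(u:ℝ)) := by
          exact mul_le_mul_of_nonneg_left (hlogb1 u hu) hκ0.le
  have hfpos : ∀ u : ℕ, 0 < u → 0 < f u := by
    intro u hu
    rw [hf u]
    exact div_pos (Real.log_pos (hA1 u hu)) (by exact_mod_cast hu)
  -- conversion between klBerR and klG
  have hkl : ∀ y ∈ Set.Ioc (0:ℝ) (1 - μ), klBerR (μ + c * y) μ = klG μ (c * y) := by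
    rintro y ⟨hy0, hy1⟩
    have hcy : c * y ≤ b := by
      rw [hbdef]; exact mul_le_mul_of_nonneg_left hy1 hc0.le
    exact klBerR_eq_klG μ (c*y) hμ0 (by positivity) (by linarith) hμ1
  have hmemIcc : ∀ y ∈ Set.Ioc (0:ℝ) (1 - μ), c * y ∈ Set.Icc (0:ℝ) b := by
    rintro y ⟨hy0, hy1⟩
    exact ⟨by positivity, by rw [hbdef]; exact mul_le_mul_of_nonneg_left hy1 hc0.le⟩
  -- scaling inequality
  have hscale : ∀ x ∈ Set.Icc (0:ℝ) b, ∀ α : ℝ, 0 ≤ α → α ≤ 1 →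
      klG μ (α * x) ≤ α * klG μ x := by
    intro x hx α hα0 hα1
    have h := Gconv.2 (⟨le_refl (0:ℝ), hb0.le⟩ : (0:ℝ) ∈ Set.Icc (0:ℝ) b) hx
      (by linarith : 0 ≤ 1 - α) hα0 (by ring)
    simpa [klG_zero] using h
  -- main argument
  intro s t hs hst
  have hts : 0 < t := lt_of_lt_of_le hs hst
  have hsR : (0:ℝ) < s := by exact_mod_cast hs
  have htR : (0:ℝ) < t := by exact_mod_cast hts
  have hstR : (s:ℝ) ≤ t := by exact_mod_cast hst
  have hrat0 : 0 < (s:ℝ)/t := div_pos hsR htR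
  have hrat1 : (s:ℝ)/t ≤ 1 := (div_le_one htR).mpr hstR
  obtain ⟨hzs_mem, hzs_sol, hzs_nosol⟩ := hz s hs
  obtain ⟨hzt_mem, hzt_sol, hzt_nosol⟩ := hz t hts
  have hFmono : (s:ℝ) * f s ≤ (t:ℝ) * f t := by
    rw [hf s, hf t, mul_div_cancel₀ _ hsR.ne', mul_div_cancel₀ _ htR.ne']
    apply Real.log_le_log (by linarith [hA1 s hs])
    have hlb : Real.logb 2 (2*(s:ℝ)) ≤ Real.logb 2 (2*(t:ℝ)) :=
      (Real.logb_le_logb (by norm_num) (by linarith) (by linarith)).mpr (by linarith)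
    gcongr
  -- main case analysis
  by_cases hEt : ∃ y ∈ Set.Ioc (0:ℝ) (1 - μ), klBerR (μ + c * y) μ = f t
  · -- t has a solution
    have heqt : klG μ (c * z t) = f t := by
      rw [← hkl _ hzt_mem]; exact hzt_sol hEt
    -- establish klG μ (c * z s) ≤ f s
    have hws : klG μ (c * z s) ≤ f s := by
      by_cases hEs : ∃ y ∈ Set.Ioc (0:ℝ) (1 - μ), klBerR (μ + c * y) μ = f s
      · rw [← hkl _ hzs_mem]; exact le_of_eq (hzs_sol hEs)
      · -- no solution at s : z s = 1 - μ and f s > klG μ b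
        have hzs1 : z s = 1 - μ := hzs_nosol hEs
        have hstrict : klG μ b < f s := by
          by_contra hle
          push_neg at hle
          apply hEs
          have hivt := intermediate_value_Icc hb0.le Gcont
          have hmemf : f s ∈ Set.Icc (klG μ 0) (klG μ b) := by
            rw [klG_zero]; exact ⟨(hfpos s hs).le, hle⟩
          obtain ⟨x, hx, hGx⟩ := hivt hmemf
          have hx0 : 0 < x := by
            rcases lt_or_eq_of_le hx.1 with h | h
            · exact h
            · exfalso
              rw [← h, klG_zero] at hGx
              exact (hfpos s hs).ne hGx
          refine ⟨x / c, ⟨div_pos hx0 hc0, ?_⟩, ?_⟩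
          · rw [div_le_iff₀ hc0]
            calc x ≤ b := hx.2
              _ = (1 - μ) * c := by rw [hbdef]; ring
          · have hxc : c * (x / c) = x := by
              field_simp
            rw [hkl _ ⟨div_pos hx0 hc0, by
              rw [div_le_iff₀ hc0]
              calc x ≤ b := hx.2
                _ = (1 - μ) * c := by rw [hbdef]; ring⟩, hxc, hGx]
        have : c * z s = b := by rw [hzs1, hbdef]
        rw [this]; exact hstrict.le
    -- combine
    have hmem1 : c * ((s/t : ℝ) * z s) ∈ Set.Icc (0:ℝ) b := by
      constructor
      · have := hzs_mem.1
        positivity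
      · rw [hbdef]
        apply mul_le_mul_of_nonneg_left _ hc0.le
        calc (s/t : ℝ) * z s ≤ 1 * z s :=
              mul_le_mul_of_nonneg_right hrat1 hzs_mem.1.le
          _ = z s := one_mul _
          _ ≤ 1 - μ := hzs_mem.2
    have hmem2 : c * z t ∈ Set.Icc (0:ℝ) b := hmemIcc _ hzt_mem
    have hmem3 : c * z s ∈ Set.Icc (0:ℝ) b := hmemIcc _ hzs_mem
    have hchain : klG μ (c * ((s/t : ℝ) * z s)) ≤ klG μ (c * z t) := by
      have e1 : c * ((s/t : ℝ) * z s) = (s/t : ℝ) * (c * z s) := by ring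
      have h1 : klG μ (c * ((s/t : ℝ) * z s)) ≤ (s/t : ℝ) * klG μ (c * z s) := by
        rw [e1]; exact hscale _ hmem3 _ hrat0.le hrat1
      have h2 : (s/t : ℝ) * klG μ (c * z s) ≤ (s/t : ℝ) * f s :=
        mul_le_mul_of_nonneg_left hws hrat0.le
      have h3 : (s/t : ℝ) * f s ≤ f t := by
        rw [div_mul_eq_mul_div, div_le_iff₀ htR]
        calc (s:ℝ) * f s ≤ (t:ℝ) * f t := hFmono
          _ = f t * t := by ring
      linarith [heqt]
    have hle : c * ((s/t : ℝ) * z s) ≤ c * z t :=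
      (Gmono.le_iff_le hmem1 hmem2).mp hchain
    have hle2 : (s/t : ℝ) * z s ≤ z t := le_of_mul_le_mul_left hle hc0
    calc (s:ℝ) * z s = (t:ℝ) * ((s/t : ℝ) * z s) := by
          field_simp
      _ ≤ (t:ℝ) * z t := mul_le_mul_of_nonneg_left hle2 htR.le
  · -- no solution at t : z t = 1 - μ
    have hzt1 : z t = 1 - μ := hzt_nosol hEt
    calc (s:ℝ) * z s ≤ (s:ℝ) * (1 - μ) :=
          mul_le_mul_of_nonneg_left hzs_mem.2 hsR.le
      _ ≤ (t:ℝ) * (1 - μ) := mul_le_mul_of_nonneg_right hstR h1μ.le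
      _ = (t:ℝ) * z t := by rw [hzt1]
end

section
/- For every α ∈ (0,1), every μ ∈ (0,1), and every x ∈ [0, 1−μ], the Kullback–Leibler divergence satisfies D(μ + x, μ) ≤ c · D(μ + α·x, μ), where c = 1 / ( α + (1−α)·log(1−α) ). -/
open Set

/-- Shape lemma: if `f'' ` is nonneg-then-nonpos on `[0,1)`, `f 0 = 0`, `f' 0 ≥ 0`,
`f 1 ≥ 0`, then `f ≥ 0` on `[0,1]`. -/
lemma shape_nonneg (f f' f'' : ℝ → ℝ)
    (hf : ∀ a ∈ Set.Ico (0:ℝ) 1, HasDerivAt f (f' a) a)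
    (hf' : ∀ a ∈ Set.Ico (0:ℝ) 1, HasDerivAt f' (f'' a) a)
    (hcont : ContinuousOn f (Set.Icc 0 1))
    (hsign : ∀ a b : ℝ, a ∈ Set.Ico (0:ℝ) 1 → b ∈ Set.Ico (0:ℝ) 1 → a ≤ b →
      0 ≤ f'' b → 0 ≤ f'' a)
    (h0 : f 0 = 0) (h0' : 0 ≤ f' 0) (h1 : 0 ≤ f 1) :
    ∀ a ∈ Set.Icc (0:ℝ) 1, 0 ≤ f a := by
  set S : Set ℝ := insert 0 {a | a ∈ Set.Ico (0:ℝ) 1 ∧ 0 ≤ f'' a} with hS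
  have hSne : S.Nonempty := ⟨0, Or.inl rfl⟩
  have hSbdd : BddAbove S := by
    refine ⟨1, ?_⟩
    rintro y (rfl | ⟨⟨_, hy1⟩, _⟩)
    · norm_num
    · exact hy1.le
  set a₀ : ℝ := sSup S with ha₀def
  have ha₀0 : 0 ≤ a₀ := le_csSup hSbdd (Or.inl rfl)
  have ha₀1 : a₀ ≤ 1 := by
    refine csSup_le hSne ?_
    rintro y (rfl | ⟨⟨_, hy1⟩, _⟩)
    · norm_num
    · exact hy1.le
  -- claim 1 : f'' ≥ 0 below a₀
  have claim1 : ∀ a : ℝ, 0 ≤ a → a < a₀ → 0 ≤ f'' a := by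
    intro a ha0 haa
    obtain ⟨y, hyS, hay⟩ := exists_lt_of_lt_csSup hSne haa
    rcases hyS with rfl | ⟨hy, hy0⟩
    · linarith
    · exact hsign a y ⟨ha0, lt_of_le_of_lt hay.le hy.2⟩ hy hay.le hy0
  -- claim 2 : f'' ≤ 0 above a₀
  have claim2 : ∀ a ∈ Set.Ico (0:ℝ) 1, a₀ < a → f'' a ≤ 0 := by
    intro a ha haa
    by_contra hpos
    push_neg at hpos
    exact absurd (le_csSup hSbdd (Or.inr ⟨ha, hpos.le⟩)) (not_le.2 haa)
  -- f' continuous on Ico 0 1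
  have hf'cont : ∀ z : ℝ, z < 1 → ContinuousOn f' (Set.Icc 0 z) := by
    intro z hz
    intro y hy
    have : y ∈ Set.Ico (0:ℝ) 1 := ⟨hy.1, lt_of_le_of_lt hy.2 hz⟩
    exact ((hf' y this).continuousAt).continuousWithinAt
  -- f' nonneg on [0, a₀] ∩ [0,1)
  have f'nonneg : ∀ z ∈ Set.Ico (0:ℝ) 1, z ≤ a₀ → 0 ≤ f' z := by
    intro z hz hza
    have hmono : MonotoneOn f' (Set.Icc 0 z) := by
      apply monotoneOn_of_hasDerivWithinAt_nonneg (convex_Icc 0 z) (hf'cont z hz.2)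
      · intro y hy
        rw [interior_Icc] at hy
        exact ((hf' y ⟨hy.1.le, lt_trans hy.2 hz.2⟩).hasDerivWithinAt)
      · intro y hy
        rw [interior_Icc] at hy
        exact claim1 y hy.1.le (lt_of_lt_of_le hy.2 hza)
    have := hmono (Set.left_mem_Icc.2 hz.1) ⟨hz.1, le_refl z⟩ hz.1
    linarith
  -- f nonneg on [0, a₀] ∩ [0,1)
  have part2 : ∀ z ∈ Set.Ico (0:ℝ) 1, z ≤ a₀ → 0 ≤ f z := by
    intro z hz hza
    have hmono : MonotoneOn f (Set.Icc 0 z) := by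
      apply monotoneOn_of_hasDerivWithinAt_nonneg (convex_Icc 0 z)
        (hcont.mono (Set.Icc_subset_Icc le_rfl hz.2.le))
      · intro y hy
        rw [interior_Icc] at hy
        exact ((hf y ⟨hy.1.le, lt_trans hy.2 hz.2⟩).hasDerivWithinAt)
      · intro y hy
        rw [interior_Icc] at hy
        exact f'nonneg y ⟨hy.1.le, lt_trans hy.2 hz.2⟩ (le_trans hy.2.le hza)
    have := hmono (Set.left_mem_Icc.2 hz.1) ⟨hz.1, le_refl z⟩ hz.1
    rw [h0] at this
    exact this
  -- concavity on [a₀, 1]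
  have hconc : ConcaveOn ℝ (Set.Icc a₀ 1) f := by
    apply concaveOn_of_hasDerivWithinAt2_nonpos (convex_Icc a₀ 1)
      (hcont.mono (Set.Icc_subset_Icc ha₀0 le_rfl)) (f' := f') (f'' := f'')
    · intro y hy
      rw [interior_Icc] at hy
      exact (hf y ⟨le_trans ha₀0 hy.1.le, hy.2⟩).hasDerivWithinAt
    · intro y hy
      rw [interior_Icc] at hy
      exact (hf' y ⟨le_trans ha₀0 hy.1.le, hy.2⟩).hasDerivWithinAt
    · intro y hy
      rw [interior_Icc] at hy
      exact claim2 y ⟨le_trans ha₀0 hy.1.le, hy.2⟩ hy.1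
  -- conclusion
  intro a ha
  rcases eq_or_lt_of_le ha.2 with rfl | ha1
  · exact h1
  rcases le_or_gt a a₀ with hle | hgt
  · exact part2 a ⟨ha.1, ha1⟩ hle
  · -- a ∈ (a₀, 1): use concavity
    have ha₀lt1 : a₀ < 1 := lt_of_lt_of_le (lt_of_le_of_lt (le_refl a₀) (lt_of_lt_of_le hgt ha.2)) le_rfl
    have hfa₀ : 0 ≤ f a₀ := part2 a₀ ⟨ha₀0, ha₀lt1⟩ le_rfl
    set lam : ℝ := (1 - a) / (1 - a₀) with hlam
    have h1a₀ : (0:ℝ) < 1 - a₀ := by linarith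
    have hlam0 : 0 ≤ lam := div_nonneg (by linarith) h1a₀.le
    have hlam1 : 0 ≤ 1 - lam := by
      rw [hlam]
      rw [sub_nonneg, div_le_one h1a₀]
      linarith
    have hsum : lam + (1 - lam) = 1 := by ring
    have hcomb : lam • a₀ + (1 - lam) • (1:ℝ) = a := by
      simp only [smul_eq_mul, hlam]
      field_simp
      ring
    have := hconc.2 (Set.left_mem_Icc.2 ha₀1) (Set.right_mem_Icc.2 ha₀1) hlam0 hlam1 hsum
    rw [hcomb] at this
    have : lam * f a₀ + (1 - lam) * f 1 ≤ f a := by simpa using this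
    nlinarith

noncomputable def psiR (s : ℝ) : ℝ := s + (1 - s) * Real.log (1 - s)

lemma psiR_zero : psiR 0 = 0 := by simp [psiR]

lemma psiR_one : psiR 1 = 1 := by simp [psiR]

lemma psiR_continuous : Continuous psiR := by
  have h : psiR = fun s => s - Real.negMulLog (1 - s) := by
    funext s
    simp [psiR, Real.negMulLog]
    ring
  rw [h]
  exact continuous_id.sub (Real.continuous_negMulLog.comp (continuous_const.sub continuous_id))

lemma psiR_hasDerivAt {s : ℝ} (hs : s < 1) : HasDerivAt psiR (-Real.log (1 - s)) s := by
  have h1 : (0:ℝ) < 1 - s := by linarith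
  have hd : HasDerivAt (fun t : ℝ => 1 - t) (-1) s := by
    simpa using (hasDerivAt_id s).const_sub 1
  have hlog : HasDerivAt (fun t : ℝ => Real.log (1 - t)) (-1 / (1 - s)) s :=
    hd.log h1.ne'
  have hmul : HasDerivAt (fun t : ℝ => (1 - t) * Real.log (1 - t))
      ((-1) * Real.log (1 - s) + (1 - s) * (-1 / (1 - s))) s := hd.mul hlog
  have := (hasDerivAt_id s).add hmul
  refine this.congr_deriv ?_
  field_simp
  ring

lemma psiR_nonneg {t : ℝ} (h0 : 0 ≤ t) (h1 : t ≤ 1) : 0 ≤ psiR t := by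
  rcases eq_or_lt_of_le h1 with rfl | h1
  · rw [psiR_one]; norm_num
  · have hpos : (0:ℝ) < 1 - t := by linarith
    have := Real.one_sub_inv_le_log_of_pos hpos
    have h2 : (1 - t) * (1 - (1-t)⁻¹) ≤ (1 - t) * Real.log (1 - t) :=
      mul_le_mul_of_nonneg_left this hpos.le
    have h3 : (1 - t) * (1 - (1-t)⁻¹) = (1 - t) - 1 := by
      field_simp
    rw [h3] at h2
    simp only [psiR]
    linarith

lemma psiR_le_sq {b : ℝ} (h0 : 0 ≤ b) (h1 : b < 1) : psiR b ≤ b^2 := by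
  have hpos : (0:ℝ) < 1 - b := by linarith
  have := Real.log_le_sub_one_of_pos hpos
  have h2 : (1 - b) * Real.log (1 - b) ≤ (1 - b) * ((1-b) - 1) :=
    mul_le_mul_of_nonneg_left this hpos.le
  simp only [psiR]
  nlinarith

lemma psiR_lt_self {b : ℝ} (h0 : 0 < b) (h1 : b < 1) : psiR b < b := by
  have hpos : (0:ℝ) < 1 - b := by linarith
  have hlog : Real.log (1 - b) < 0 := Real.log_neg hpos (by linarith)
  simp only [psiR]
  nlinarith

lemma psiR_pos {b : ℝ} (h0 : 0 < b) (h1 : b < 1) : 0 < psiR b := by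
  have hpos : (0:ℝ) < 1 - b := by linarith
  have hne : (1 - b)⁻¹ ≠ 1 := by
    rw [ne_eq, inv_eq_one]
    linarith
  have := Real.log_lt_sub_one_of_pos (inv_pos.2 hpos) hne
  rw [Real.log_inv] at this
  have h2 : (1-b)⁻¹ - 1 = b / (1 - b) := by field_simp; ring
  rw [h2] at this
  have h3 : -Real.log (1 - b) * (1 - b) < (b / (1 - b)) * (1 - b) :=
    mul_lt_mul_of_pos_right this hpos
  rw [div_mul_cancel₀ _ hpos.ne'] at h3
  simp only [psiR]
  nlinarith

lemma psiR_supermul {b : ℝ} (hb : b ∈ Set.Ioo (0:ℝ) 1) :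
    ∀ a ∈ Set.Icc (0:ℝ) 1, psiR a * psiR b ≤ psiR (a * b) := by
  obtain ⟨hb0, hb1⟩ := hb
  set f : ℝ → ℝ := fun a => psiR (a * b) - psiR a * psiR b with hfdef
  set f' : ℝ → ℝ := fun a => -Real.log (1 - a * b) * b - -Real.log (1 - a) * psiR b with hf'def
  set f'' : ℝ → ℝ := fun a => b / (1 - a * b) * b - 1 / (1 - a) * psiR b with hf''def
  have hab_lt : ∀ a : ℝ, 0 ≤ a → a < 1 → a * b < 1 := by
    intro a ha0 ha1
    calc a * b ≤ a * 1 := by nlinarith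
    _ < 1 := by linarith
  have hf : ∀ a ∈ Set.Ico (0:ℝ) 1, HasDerivAt f (f' a) a := by
    intro a ⟨ha0, ha1⟩
    have h1 : a * b < 1 := hab_lt a ha0 ha1
    have hmul : HasDerivAt (fun x : ℝ => x * b) b a := hasDerivAt_mul_const b
    have h2 : HasDerivAt (fun x : ℝ => psiR (x * b)) (-Real.log (1 - a * b) * b) a :=
      by have := (psiR_hasDerivAt h1).comp a hmul; exact this
    have h3 : HasDerivAt (fun x : ℝ => psiR x * psiR b) (-Real.log (1 - a) * psiR b) a :=
      (psiR_hasDerivAt ha1).mul_const (psiR b)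
    exact h2.sub h3
  have hf' : ∀ a ∈ Set.Ico (0:ℝ) 1, HasDerivAt f' (f'' a) a := by
    intro a ⟨ha0, ha1⟩
    have h1 : (0:ℝ) < 1 - a * b := by linarith [hab_lt a ha0 ha1]
    have h1a : (0:ℝ) < 1 - a := by linarith
    have hd1 : HasDerivAt (fun x : ℝ => 1 - x * b) (-b) a := by
      simpa using (hasDerivAt_mul_const b).const_sub 1
    have hd2 : HasDerivAt (fun x : ℝ => 1 - x) (-1) a := by
      simpa using (hasDerivAt_id a).const_sub 1
    have hlog1 : HasDerivAt (fun x : ℝ => Real.log (1 - x * b)) (-b / (1 - a * b)) a :=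
      hd1.log h1.ne'
    have hlog2 : HasDerivAt (fun x : ℝ => Real.log (1 - x)) (-1 / (1 - a)) a :=
      hd2.log h1a.ne'
    have T1 : HasDerivAt (fun x : ℝ => -Real.log (1 - x * b) * b)
        (-(-b / (1 - a * b)) * b) a := (hlog1.neg.mul_const b)
    have T2 : HasDerivAt (fun x : ℝ => -Real.log (1 - x) * psiR b)
        (-(-1 / (1 - a)) * psiR b) a := (hlog2.neg.mul_const (psiR b))
    have := T1.sub T2
    refine this.congr_deriv ?_
    simp only [hf''def]
    field_simp
  have hcont : ContinuousOn f (Set.Icc 0 1) :=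
    ((psiR_continuous.comp (continuous_id.mul continuous_const)).sub
      ((psiR_continuous.mul continuous_const))).continuousOn
  have hsign : ∀ a c : ℝ, a ∈ Set.Ico (0:ℝ) 1 → c ∈ Set.Ico (0:ℝ) 1 → a ≤ c →
      0 ≤ f'' c → 0 ≤ f'' a := by
    intro a c ⟨ha0, ha1⟩ ⟨hc0, hc1⟩ hac hc
    have hca : (0:ℝ) < 1 - c := by linarith
    have hcb : (0:ℝ) < 1 - c * b := by linarith [hab_lt c hc0 hc1]
    have haa : (0:ℝ) < 1 - a := by linarith
    have hb2 : (0:ℝ) < 1 - a * b := by linarith [hab_lt a ha0 ha1]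
    simp only [hf''def] at hc ⊢
    rw [sub_nonneg] at hc ⊢
    rw [div_mul_eq_mul_div, div_mul_eq_mul_div, div_le_div_iff₀ hca hcb] at hc
    rw [div_mul_eq_mul_div, div_mul_eq_mul_div, div_le_div_iff₀ haa hb2]
    have hpsib : psiR b ≤ b := (psiR_lt_self hb0 hb1).le
    have hpsib0 : 0 ≤ psiR b := psiR_nonneg hb0.le hb1.le
    nlinarith [mul_nonneg (mul_nonneg (sub_nonneg.2 hac) hb0.le) (sub_nonneg.2 hpsib)]
  have h0 : f 0 = 0 := by simp [hfdef, psiR_zero]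
  have h0' : 0 ≤ f' 0 := by simp [hf'def]
  have h1 : 0 ≤ f 1 := by simp [hfdef, psiR_one]
  intro a ha
  have := shape_nonneg f f' f'' hf hf' hcont hsign h0 h0' h1 a ha
  simp only [hfdef] at this
  linarith

noncomputable def AR (μ y : ℝ) : ℝ := (μ + y) * Real.log ((μ + y) / μ) - y

lemma AR_nonneg {μ y : ℝ} (hμ : 0 < μ) (hy : 0 ≤ y) : 0 ≤ AR μ y := by
  have hpos : (0:ℝ) < (μ + y) / μ := div_pos (by linarith) hμ
  have h := Real.one_sub_inv_le_log_of_pos hpos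
  have hinv : ((μ + y) / μ)⁻¹ = μ / (μ + y) := by
    rw [inv_div]
  rw [hinv] at h
  have h2 : (μ + y) * (1 - μ / (μ + y)) ≤ (μ + y) * Real.log ((μ + y) / μ) :=
    mul_le_mul_of_nonneg_left h (by linarith)
  have h3 : (μ + y) * (1 - μ / (μ + y)) = y := by
    field_simp
    ring
  rw [h3] at h2
  simp only [AR]
  linarith

lemma AR_hasDerivAt {μ x : ℝ} (hμ : 0 < μ) (hx : 0 ≤ x) {a : ℝ} (ha : 0 ≤ a) :
    HasDerivAt (fun t : ℝ => AR μ (t * x)) (x * Real.log ((μ + a * x) / μ)) a := by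
  have hpos : (0:ℝ) < μ + a * x := by positivity
  have hdiv : (0:ℝ) < (μ + a * x) / μ := div_pos hpos hμ
  have hlin : HasDerivAt (fun t : ℝ => (μ + t * x) / μ) (x / μ) a := by
    simpa using (((hasDerivAt_mul_const x).const_add μ).div_const μ)
  have hlog : HasDerivAt (fun t : ℝ => Real.log ((μ + t * x) / μ))
      ((x / μ) / ((μ + a * x) / μ)) a := hlin.log hdiv.ne'
  have hadd : HasDerivAt (fun t : ℝ => μ + t * x) x a := by
    simpa using ((hasDerivAt_mul_const x).const_add μ)
  have hmul : HasDerivAt (fun t : ℝ => (μ + t * x) * Real.log ((μ + t * x) / μ))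
      (x * Real.log ((μ + a * x) / μ) + (μ + a * x) * ((x / μ) / ((μ + a * x) / μ))) a :=
    hadd.mul hlog
  have hfull := hmul.sub (hasDerivAt_mul_const x)
  have : (fun t : ℝ => (μ + t * x) * Real.log ((μ + t * x) / μ) - t * x)
      = fun t : ℝ => AR μ (t * x) := by
    funext t; simp [AR]
  rw [show ((fun t : ℝ => (μ + t * x) * Real.log ((μ + t * x) / μ)) - fun t => t * x) = fun t : ℝ => AR μ (t * x) from this] at hfull
  refine hfull.congr_deriv ?_
  have : (μ + a * x) * (x / μ / ((μ + a * x) / μ)) = x := by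
    field_simp
  rw [this]
  ring

lemma AR_scale {μ x : ℝ} (hμ : 0 < μ) (hx : 0 ≤ x) :
    ∀ a ∈ Set.Icc (0:ℝ) 1, a^2 * AR μ x ≤ AR μ (a * x) := by
  set f : ℝ → ℝ := fun a => AR μ (a * x) - a^2 * AR μ x with hfdef
  set f' : ℝ → ℝ := fun a => x * Real.log ((μ + a * x) / μ) - 2 * a * AR μ x with hf'def
  set f'' : ℝ → ℝ := fun a => x * ((x / μ) / ((μ + a * x) / μ)) - 2 * AR μ x with hf''def
  have hf : ∀ a ∈ Set.Ico (0:ℝ) 1, HasDerivAt f (f' a) a := by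
    intro a ⟨ha0, _⟩
    have h1 := AR_hasDerivAt hμ hx ha0
    have h2 : HasDerivAt (fun t : ℝ => t^2 * AR μ x) (2 * a * AR μ x) a := by
      simpa [mul_comm] using ((hasDerivAt_pow 2 a).mul_const (AR μ x))
    exact h1.sub h2
  have hf' : ∀ a ∈ Set.Ico (0:ℝ) 1, HasDerivAt f' (f'' a) a := by
    intro a ⟨ha0, _⟩
    have hpos : (0:ℝ) < μ + a * x := by positivity
    have hdiv : (0:ℝ) < (μ + a * x) / μ := div_pos hpos hμ
    have hlin : HasDerivAt (fun t : ℝ => (μ + t * x) / μ) (x / μ) a := by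
      simpa using (((hasDerivAt_mul_const x).const_add μ).div_const μ)
    have hlog : HasDerivAt (fun t : ℝ => Real.log ((μ + t * x) / μ))
        ((x / μ) / ((μ + a * x) / μ)) a := hlin.log hdiv.ne'
    have h1 : HasDerivAt (fun t : ℝ => x * Real.log ((μ + t * x) / μ))
        (x * ((x / μ) / ((μ + a * x) / μ))) a := hlog.const_mul x
    have h2 : HasDerivAt (fun t : ℝ => 2 * t * AR μ x) (2 * AR μ x) a := by
      have := (hasDerivAt_id a).const_mul 2
      simpa [mul_assoc, mul_comm] using this.mul_const (AR μ x)
    exact h1.sub h2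
  have hcont : ContinuousOn f (Set.Icc 0 1) := by
    apply ContinuousOn.sub
    · apply ContinuousOn.sub
      · apply ContinuousOn.mul
        · fun_prop
        · apply ContinuousOn.log
          · fun_prop
          · intro a ha
            have : (0:ℝ) < μ + a * x := by
              have := ha.1
              positivity
            positivity
      · fun_prop
    · fun_prop
  have hsign : ∀ a c : ℝ, a ∈ Set.Ico (0:ℝ) 1 → c ∈ Set.Ico (0:ℝ) 1 → a ≤ c →
      0 ≤ f'' c → 0 ≤ f'' a := by
    intro a c ⟨ha0, _⟩ ⟨hc0, _⟩ hac hc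
    have hpa : (0:ℝ) < μ + a * x := by positivity
    have hpc : (0:ℝ) < μ + c * x := by positivity
    simp only [hf''def] at hc ⊢
    have key : x * ((x / μ) / ((μ + c * x) / μ)) ≤ x * ((x / μ) / ((μ + a * x) / μ)) := by
      have ec : x / μ / ((μ + c * x) / μ) = x / (μ + c * x) := by
        rw [div_div_div_comm, div_self hμ.ne', div_one]
      have ea : x / μ / ((μ + a * x) / μ) = x / (μ + a * x) := by
        rw [div_div_div_comm, div_self hμ.ne', div_one]
      rw [ec, ea]
      apply mul_le_mul_of_nonneg_left _ hx
      apply div_le_div_of_nonneg_left (by nlinarith) hpa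
      nlinarith
    linarith
  have h0 : f 0 = 0 := by
    simp [hfdef, AR, div_self hμ.ne']
  have h0' : 0 ≤ f' 0 := by
    simp [hf'def, div_self hμ.ne']
  have h1 : 0 ≤ f 1 := by simp [hfdef]
  intro a ha
  have := shape_nonneg f f' f'' hf hf' hcont hsign h0 h0' h1 a ha
  simp only [hfdef] at this
  linarith


lemma klBerR_decomp {μ : ℝ} (hμ0 : 0 < μ) (hμ1 : μ < 1) (y : ℝ) :
    klBerR (μ + y) μ = AR μ y + (1 - μ) * psiR (y / (1 - μ)) := by
  have h1μ : (1:ℝ) - μ ≠ 0 := by linarith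
  have e1 : 1 - y / (1 - μ) = (1 - μ - y) / (1 - μ) := by
    field_simp
  simp only [klBerR, AR, psiR, e1]
  have e2 : 1 - (μ + y) = 1 - μ - y := by ring
  rw [e2]
  have e3 : (1 - μ) * (y / (1 - μ) + (1 - μ - y) / (1 - μ) * Real.log ((1 - μ - y) / (1 - μ)))
      = y + (1 - μ - y) * Real.log ((1 - μ - y) / (1 - μ)) := by
    field_simp
  rw [e3]
  ring

/-- For every `α ∈ (0,1)`, `μ ∈ (0,1)` and `x ∈ [0, 1-μ]`:
`D(μ + x, μ) ≤ c · D(μ + α·x, μ)` with `c = 1/(α + (1-α)·log(1-α))`. -/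
theorem kl_dilation_inequality
    (α μ x c : ℝ)
    (hα : α ∈ Set.Ioo (0:ℝ) 1) (hμ : μ ∈ Set.Ioo (0:ℝ) 1)
    (hx : x ∈ Set.Icc (0:ℝ) (1 - μ))
    (hc : c = 1 / (α + (1 - α) * Real.log (1 - α))) :
    klBerR (μ + x) μ ≤ c * klBerR (μ + α * x) μ := by
  obtain ⟨hα0, hα1⟩ := hα
  obtain ⟨hμ0, hμ1⟩ := hμ
  obtain ⟨hx0, hx1⟩ := hx
  have h1μ : (0:ℝ) < 1 - μ := by linarith
  have hkψ : α + (1 - α) * Real.log (1 - α) = psiR α := by simp [psiR]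
  have hk : 0 < psiR α := psiR_pos hα0 hα1
  rw [hc, hkψ, one_div, inv_mul_eq_div, le_div_iff₀ hk]
  -- decompositions
  set t : ℝ := x / (1 - μ) with htdef
  have ht0 : 0 ≤ t := div_nonneg hx0 h1μ.le
  have ht1 : t ≤ 1 := by
    rw [htdef, div_le_one h1μ]
    linarith
  have hαt : α * x / (1 - μ) = t * α := by
    rw [htdef]; ring
  rw [klBerR_decomp hμ0 hμ1 x, klBerR_decomp hμ0 hμ1 (α * x), hαt]
  -- A-part
  have hA1 : psiR α * AR μ x ≤ AR μ (α * x) := by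
    have h1 : psiR α ≤ α^2 := psiR_le_sq hα0.le hα1
    have h2 : α^2 * AR μ x ≤ AR μ (α * x) := AR_scale hμ0 hx0 α ⟨hα0.le, hα1.le⟩
    have h3 : 0 ≤ AR μ x := AR_nonneg hμ0 hx0
    nlinarith
  -- psi-part
  have hB1 : psiR t * psiR α ≤ psiR (t * α) := psiR_supermul ⟨hα0, hα1⟩ t ⟨ht0, ht1⟩
  have hψt : 0 ≤ psiR t := psiR_nonneg ht0 ht1
  nlinarith [hB1, hA1, h1μ.le]
end

section
/- For every α ∈ (0,1) with c = 1 / ( α + (1−α)·log(1−α) ), and every μ ∈ (0,1), the boundary inequality holds: log(1/μ) ≤ c · ( ((1−α)·μ + α) · log( 1 + α/((1−α)·μ) ) + log(1−α) ). -/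
open Set

private lemma kl_bern (α t : ℝ) (hα0 : 0 < α) (hα1 : α < 1) (ht : 1 ≤ t) :
    Real.log (1 + α / (1 - α) * t) ≤ t * Real.log (1 / (1 - α)) := by
  have h1 : 0 < 1 - α := by linarith
  have hb : 0 ≤ α / (1 - α) := div_nonneg hα0.le h1.le
  have hB := one_add_mul_self_le_rpow_one_add (s := α / (1 - α)) (by linarith) ht
  have hpos : (0:ℝ) < 1 + α / (1 - α) := by linarith
  have hpos2 : (0:ℝ) < 1 + α / (1 - α) * t := by nlinarith
  calc Real.log (1 + α / (1 - α) * t)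
      ≤ Real.log ((1 + α / (1 - α)) ^ t) := by
        apply Real.log_le_log hpos2
        calc 1 + α / (1 - α) * t = 1 + t * (α / (1 - α)) := by ring
          _ ≤ _ := hB
    _ = t * Real.log (1 + α / (1 - α)) := Real.log_rpow hpos t
    _ = t * Real.log (1 / (1 - α)) := by
        congr 1
        rw [show 1 + α / (1 - α) = 1 / (1 - α) by field_simp; ring]

/-- The boundary inequality: for `α ∈ (0,1)` with `c = 1/(α + (1-α)·log(1-α))`
and every `μ ∈ (0,1)`,
`log(1/μ) ≤ c·( ((1-α)·μ + α)·log(1 + α/((1-α)·μ)) + log(1-α) )`. -/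
theorem kl_boundary_inequality
    (α μ c : ℝ)
    (hα : α ∈ Set.Ioo (0:ℝ) 1) (hμ : μ ∈ Set.Ioo (0:ℝ) 1)
    (hc : c = 1 / (α + (1 - α) * Real.log (1 - α))) :
    Real.log (1 / μ) ≤
      c * (((1 - α) * μ + α) * Real.log (1 + α / ((1 - α) * μ)) + Real.log (1 - α)) := by
  obtain ⟨hα0, hα1⟩ := hα
  obtain ⟨hμ0, hμ1⟩ := hμ
  have h1 : (0:ℝ) < 1 - α := by linarith
  -- K > 0
  have hlogK : Real.log (1 / (1 - α)) < α / (1 - α) := by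
    have := Real.log_lt_sub_one_of_pos (x := 1 / (1 - α)) (by positivity)
      (by
        intro h
        have : (1:ℝ) - α = 1 := by
          field_simp at h; linarith
        linarith)
    calc Real.log (1 / (1 - α)) < 1 / (1 - α) - 1 := this
      _ = α / (1 - α) := by field_simp; ring
  have hloginv : Real.log (1 / (1 - α)) = - Real.log (1 - α) := by
    rw [one_div, Real.log_inv]
  have hK : 0 < α + (1 - α) * Real.log (1 - α) := by
    have h2 : (1 - α) * Real.log (1 / (1 - α)) < α := by
      calc (1 - α) * Real.log (1 / (1 - α)) < (1 - α) * (α / (1 - α)) := by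
            exact (mul_lt_mul_iff_right₀ h1).2 hlogK
        _ = α := by field_simp
    rw [hloginv] at h2; linarith
  set K : ℝ := α + (1 - α) * Real.log (1 - α) with hKdef
  set g : ℝ → ℝ := fun x =>
    ((1 - α) * x + α) * (Real.log ((1 - α) * x + α) - Real.log ((1 - α) * x)) +
      Real.log (1 - α) + K * Real.log x with hg
  -- derivative of g at any x > 0
  have hderiv : ∀ x : ℝ, 0 < x → HasDerivAt g
      ((1 - α) * (Real.log ((1 - α) * x + α) - Real.log ((1 - α) * x)) - α / x + K / x) x := by
    intro x hx
    have hu : (0:ℝ) < (1 - α) * x + α := by positivity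
    have hv : (0:ℝ) < (1 - α) * x := by positivity
    have hlin : HasDerivAt (fun y : ℝ => (1 - α) * y + α) (1 - α) x := by
      simpa using ((hasDerivAt_id x).const_mul (1 - α)).add_const α
    have hlin2 : HasDerivAt (fun y : ℝ => (1 - α) * y) (1 - α) x := by
      simpa using (hasDerivAt_id x).const_mul (1 - α)
    have hlu : HasDerivAt (fun y : ℝ => Real.log ((1 - α) * y + α))
        (((1 - α) * x + α)⁻¹ * (1 - α)) x :=
      by have := (Real.hasDerivAt_log hu.ne').comp x hlin; exact this
    have hlv : HasDerivAt (fun y : ℝ => Real.log ((1 - α) * y))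
        (((1 - α) * x)⁻¹ * (1 - α)) x :=
      (Real.hasDerivAt_log hv.ne').comp x hlin2
    have hprod := hlin.mul (hlu.sub hlv)
    have hlogx : HasDerivAt (fun y : ℝ => K * Real.log y) (K * x⁻¹) x :=
      (Real.hasDerivAt_log hx.ne').const_mul K
    have htot := (hprod.add_const (Real.log (1 - α))).add hlogx
    refine htot.congr_deriv ?_
    simp only [Pi.sub_apply]
    field_simp
    ring
  have hg1 : g 1 = 0 := by
    simp only [hg, mul_one, Real.log_one, mul_zero, add_zero]
    have h2 : (1:ℝ) - α + α = 1 := by ring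
    rw [h2]
    simp
  -- antitone on Ioc 0 1
  have hanti : AntitoneOn g (Set.Ioc (0:ℝ) 1) := by
    apply antitoneOn_of_deriv_nonpos (convex_Ioc 0 1)
    · intro x hx
      exact ((hderiv x hx.1).continuousAt).continuousWithinAt
    · intro x hx
      rw [interior_Ioc] at hx
      exact ((hderiv x hx.1).differentiableAt).differentiableWithinAt
    · intro x hx
      rw [interior_Ioc] at hx
      obtain ⟨hx0, hx1⟩ := hx
      rw [(hderiv x hx0).deriv]
      have hu : (0:ℝ) < (1 - α) * x + α := by positivity
      have hv : (0:ℝ) < (1 - α) * x := by positivity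
      have ht : 1 ≤ 1 / x := by rw [le_div_iff₀ hx0]; linarith
      have hB := kl_bern α (1 / x) hα0 hα1 ht
      have hrw : Real.log ((1 - α) * x + α) - Real.log ((1 - α) * x)
          = Real.log (1 + α / (1 - α) * (1 / x)) := by
        rw [← Real.log_div hu.ne' hv.ne']
        congr 1
        field_simp
      rw [hrw]
      have key : (1 - α) * Real.log (1 + α / (1 - α) * (1 / x)) ≤ (α - K) / x := by
        have : (1 - α) * Real.log (1 + α / (1 - α) * (1 / x))
            ≤ (1 - α) * ((1 / x) * Real.log (1 / (1 - α))) :=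
          (mul_le_mul_iff_right₀ h1).2 hB
        calc (1 - α) * Real.log (1 + α / (1 - α) * (1 / x)) ≤
            (1 - α) * ((1 / x) * Real.log (1 / (1 - α))) := this
          _ = (α - K) / x := by
              rw [hloginv, hKdef]
              field_simp; ring
      have : (α - K) / x - α / x + K / x = 0 := by field_simp; ring
      linarith
  have hgμ : 0 ≤ g μ := by
    have := hanti (Set.mem_Ioc.2 ⟨hμ0, hμ1.le⟩) (Set.mem_Ioc.2 ⟨one_pos, le_refl 1⟩) hμ1.le
    rw [hg1] at this
    exact this
  -- conclude
  have hu : (0:ℝ) < (1 - α) * μ + α := by positivity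
  have hv : (0:ℝ) < (1 - α) * μ := by positivity
  have hrw : Real.log (1 + α / ((1 - α) * μ))
      = Real.log ((1 - α) * μ + α) - Real.log ((1 - α) * μ) := by
    rw [show 1 + α / ((1 - α) * μ) = ((1 - α) * μ + α) / ((1 - α) * μ) by field_simp,
      Real.log_div hu.ne' hv.ne']
  rw [hrw, hc]
  have hlogμ : Real.log (1 / μ) = - Real.log μ := by rw [one_div, Real.log_inv]
  rw [hlogμ, one_div, ← div_eq_inv_mul, le_div_iff₀ hK]
  simp only [hg] at hgμ
  nlinarith [hgμ]
end

section
/- Suppose ε ∈ (0,1) is such that D(a_t, μ) ≤ f_t(ε) for all t ∈ ℕ. Then for any fixed μ̃ ∈ (μ, 1) and any t ∈ ℕ and δ ∈ (0,1): if f_t(δ·ε) < D*(μ̃, μ), then U_t(f_t(δ)) < μ̃. -/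
open Set

/-- KL divergence between Bernoulli(p) and Bernoulli(q), with the convention
`D(p,q) = ⊤` when `q ∈ {0,1}` and `p ≠ q`. -/
noncomputable def klBer (p q : ℝ) : EReal :=
  if (q = 0 ∨ q = 1) ∧ p ≠ q then ⊤ else ((klBerR p q : ℝ) : EReal)

/-- Chernoff information between Bernoulli(x) and Bernoulli(y) for `0 < x < y < 1`. -/
noncomputable def chernoffR (x y : ℝ) : ℝ :=
  ⨅ z : Set.Ioo (0:ℝ) 1, max (klBerR z x) (klBerR z y)

lemma klBerR_eq (p q : ℝ) (hq0 : q ≠ 0) (hq1 : q ≠ 1) :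
    klBerR p q = p * Real.log p + (1-p) * Real.log (1-p)
      - p * Real.log q - (1-p) * Real.log (1-q) := by
  have hq1' : (1:ℝ) - q ≠ 0 := sub_ne_zero.mpr (Ne.symm hq1)
  unfold klBerR
  by_cases hp0 : p = 0
  · subst hp0; simp [Real.log_div one_ne_zero hq1']
  by_cases hp1 : p = 1
  · subst hp1; simp [Real.log_div one_ne_zero hq0]
  · have hp1' : (1:ℝ) - p ≠ 0 := sub_ne_zero.mpr (Ne.symm hp1)
    rw [Real.log_div hp0 hq0, Real.log_div hp1' hq1']; ring

lemma klBerR_nonneg {p q : ℝ} (hp : p ∈ Icc (0:ℝ) 1) (hq : q ∈ Ioo (0:ℝ) 1) :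
    0 ≤ klBerR p q := by
  obtain ⟨hp0, hp1⟩ := hp
  obtain ⟨hq0, hq1⟩ := hq
  have h1 : p - q ≤ p * Real.log (p / q) := by
    rcases eq_or_lt_of_le hp0 with h | h
    · simp [← h]; linarith
    · have hl : Real.log (q / p) ≤ q / p - 1 := Real.log_le_sub_one_of_pos (by positivity)
      have he : Real.log (p / q) = - Real.log (q / p) := by
        rw [← Real.log_inv, inv_div]
      rw [he]
      have : q / p * p = q := div_mul_cancel₀ q (ne_of_gt h)
      nlinarith
  have h2 : q - p ≤ (1 - p) * Real.log ((1 - p) / (1 - q)) := by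
    rcases eq_or_lt_of_le hp1 with h | h
    · simp [h]; linarith
    · have hp1' : (0:ℝ) < 1 - p := by linarith
      have hq1' : (0:ℝ) < 1 - q := by linarith
      have hl : Real.log ((1-q) / (1-p)) ≤ (1-q) / (1-p) - 1 :=
        Real.log_le_sub_one_of_pos (by positivity)
      have he : Real.log ((1-p) / (1-q)) = - Real.log ((1-q) / (1-p)) := by
        rw [← Real.log_inv, inv_div]
      rw [he]
      have : (1-q) / (1-p) * (1-p) = (1-q) := div_mul_cancel₀ _ (ne_of_gt hp1')
      nlinarith
  unfold klBerR; linarith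

lemma klBerR_mono_left {μ : ℝ} (hμ : μ ∈ Ioo (0:ℝ) 1) {x y : ℝ}
    (hx : μ ≤ x) (hxy : x ≤ y) (hy : y ≤ 1) : klBerR x μ ≤ klBerR y μ := by
  obtain ⟨hμ0, hμ1⟩ := hμ
  set G : ℝ → ℝ := fun z => z * Real.log z + (1-z) * Real.log (1-z)
      - z * Real.log μ - (1-z) * Real.log (1-μ) with hGdef
  have hGeq : ∀ z : ℝ, klBerR z μ = G z := fun z =>
    klBerR_eq z μ (ne_of_gt hμ0) (ne_of_lt hμ1)
  have hG : ∀ z ∈ Ioo (0:ℝ) 1,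
      HasDerivAt G (Real.log z - Real.log (1-z) - Real.log μ + Real.log (1-μ)) z := by
    intro z hz
    have hz1 : (1:ℝ) - z ≠ 0 := sub_ne_zero.mpr (ne_of_gt (by linarith [hz.2]))
    have h1 := Real.hasDerivAt_mul_log (ne_of_gt hz.1)
    have h2 : HasDerivAt (fun w : ℝ => (1-w) * Real.log (1-w))
        ((Real.log (1-z) + 1) * (-1)) z := by
      have := (Real.hasDerivAt_mul_log hz1).comp z
        ((hasDerivAt_id z).const_sub 1)
      exact this
    have h3 : HasDerivAt (fun w : ℝ => w * Real.log μ) (1 * Real.log μ) z :=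
      (hasDerivAt_id z).mul_const _
    have h4 : HasDerivAt (fun w : ℝ => (1-w) * Real.log (1-μ)) ((-1) * Real.log (1-μ)) z :=
      ((hasDerivAt_id z).const_sub 1).mul_const _
    have := ((h1.add h2).sub h3).sub h4
    exact this.congr_deriv (by ring)
  have hcont : ContinuousOn G (Icc μ 1) := by
    have : Continuous G := by
      apply Continuous.sub
      apply Continuous.sub
      apply Continuous.add Real.continuous_mul_log
      · exact Real.continuous_mul_log.comp (continuous_const.sub continuous_id)
      · exact continuous_id.mul continuous_const
      · exact (continuous_const.sub continuous_id).mul continuous_const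
    exact this.continuousOn
  have hmono : MonotoneOn G (Icc μ 1) := by
    apply monotoneOn_of_deriv_nonneg (convex_Icc μ 1) hcont
    · intro z hz
      rw [interior_Icc] at hz
      exact ((hG z ⟨lt_trans hμ0 hz.1, hz.2⟩).differentiableAt).differentiableWithinAt
    · intro z hz
      rw [interior_Icc] at hz
      have hz' : z ∈ Ioo (0:ℝ) 1 := ⟨lt_trans hμ0 hz.1, hz.2⟩
      rw [(hG z hz').deriv]
      have l1 : Real.log μ ≤ Real.log z := Real.log_le_log hμ0 (le_of_lt hz.1)
      have l2 : Real.log (1-z) ≤ Real.log (1-μ) :=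
        Real.log_le_log (by linarith [hz.2]) (by linarith [hz.1])
      linarith
  rw [hGeq, hGeq]
  exact hmono ⟨hx, le_trans hxy hy⟩ ⟨le_trans hx hxy, hy⟩ hxy

lemma klBerR_mono_right {p x y : ℝ} (hp : 0 ≤ p) (hpx : p ≤ x) (hx : 0 < x)
    (hxy : x ≤ y) (hy : y < 1) : klBerR p x ≤ klBerR p y := by
  set H : ℝ → ℝ := fun q => p * Real.log p + (1-p) * Real.log (1-p)
      - p * Real.log q - (1-p) * Real.log (1-q) with hHdef
  have hHeq : ∀ q ∈ Icc x y, klBerR p q = H q := by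
    intro q hq
    exact klBerR_eq p q (ne_of_gt (lt_of_lt_of_le hx hq.1))
      (ne_of_lt (lt_of_le_of_lt hq.2 hy))
  have hH : ∀ q ∈ Ioo (0:ℝ) 1,
      HasDerivAt H (-(p / q) + (1-p) / (1-q)) q := by
    intro q hq
    have hq1 : (1:ℝ) - q ≠ 0 := sub_ne_zero.mpr (ne_of_gt (by linarith [hq.2]))
    have h1 : HasDerivAt (fun w : ℝ => p * Real.log w) (p * (1/q)) q := by
      simpa using (Real.hasDerivAt_log (ne_of_gt hq.1)).const_mul p
    have h2 : HasDerivAt (fun w : ℝ => (1-p) * Real.log (1-w))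
        ((1-p) * ((1/(1-q)) * (-1))) q := by
      have := ((Real.hasDerivAt_log hq1).comp q ((hasDerivAt_id q).const_sub 1)).const_mul (1-p)
      simpa [Function.comp] using this
    have := (((hasDerivAt_const q (p * Real.log p + (1-p) * Real.log (1-p))).sub h1).sub h2)
    exact this.congr_deriv (by ring)
  have hcont : ContinuousOn H (Icc x y) := by
    intro q hq
    have hq0 : q ≠ 0 := ne_of_gt (lt_of_lt_of_le hx hq.1)
    have hq1 : (1:ℝ) - q ≠ 0 := sub_ne_zero.mpr (ne_of_gt (by
      have := lt_of_le_of_lt hq.2 hy; linarith))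
    apply ContinuousAt.continuousWithinAt
    apply ContinuousAt.sub
    apply ContinuousAt.sub continuousAt_const
    · exact continuousAt_const.mul (Real.continuousAt_log hq0)
    · exact ((Real.continuousAt_log hq1).comp ((continuous_const.sub continuous_id).continuousAt)).const_mul (1-p)
  have hmono : MonotoneOn H (Icc x y) := by
    apply monotoneOn_of_deriv_nonneg (convex_Icc x y) hcont
    · intro q hq
      rw [interior_Icc] at hq
      have hq' : q ∈ Ioo (0:ℝ) 1 := ⟨lt_trans hx hq.1, lt_trans hq.2 hy⟩
      exact ((hH q hq').differentiableAt).differentiableWithinAt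
    · intro q hq
      rw [interior_Icc] at hq
      have hq' : q ∈ Ioo (0:ℝ) 1 := ⟨lt_trans hx hq.1, lt_trans hq.2 hy⟩
      rw [(hH q hq').deriv]
      have hq0 : q ≠ 0 := ne_of_gt hq'.1
      have h1q : (1:ℝ) - q ≠ 0 := sub_ne_zero.mpr (ne_of_gt (by linarith [hq'.2]))
      have e : -(p / q) + (1-p) / (1-q) = (q - p) / (q * (1-q)) := by
        field_simp
        ring
      rw [e]
      apply div_nonneg (by linarith [hq.1]) (by nlinarith [hq'.1, hq'.2])
  rw [hHeq x ⟨le_refl x, hxy⟩, hHeq y ⟨hxy, le_refl y⟩]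
  exact hmono ⟨le_refl x, hxy⟩ ⟨hxy, le_refl y⟩ hxy

lemma klBerR_continuous_left {q : ℝ} (hq0 : q ≠ 0) (hq1 : q ≠ 1) :
    Continuous (fun p => klBerR p q) := by
  have : (fun p => klBerR p q) = fun p => p * Real.log p + (1-p) * Real.log (1-p)
      - p * Real.log q - (1-p) * Real.log (1-q) :=
    funext fun p => klBerR_eq p q hq0 hq1
  rw [this]
  apply Continuous.sub
  apply Continuous.sub
  apply Continuous.add Real.continuous_mul_log
  · exact Real.continuous_mul_log.comp (continuous_const.sub continuous_id)
  · exact continuous_id.mul continuous_const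
  · exact (continuous_const.sub continuous_id).mul continuous_const

lemma klBerR_continuousAt_right (p : ℝ) {q : ℝ} (hq : q ∈ Ioo (0:ℝ) 1) :
    ContinuousAt (fun w => klBerR p w) q := by
  have hmem : Ioo (0:ℝ) 1 ∈ nhds q := isOpen_Ioo.mem_nhds hq
  have hcong : (fun w => klBerR p w) =ᶠ[nhds q] fun w =>
      p * Real.log p + (1-p) * Real.log (1-p) - p * Real.log w - (1-p) * Real.log (1-w) := by
    filter_upwards [hmem] with w hw
    exact klBerR_eq p w (ne_of_gt hw.1) (ne_of_lt hw.2)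
  have h1q : (1:ℝ) - q ≠ 0 := sub_ne_zero.mpr (ne_of_gt hq.2)
  have hca : ContinuousAt (fun w : ℝ =>
      p * Real.log p + (1-p) * Real.log (1-p) - p * Real.log w - (1-p) * Real.log (1-w)) q := by
    apply ContinuousAt.sub
    apply ContinuousAt.sub continuousAt_const
    · exact continuousAt_const.mul (Real.continuousAt_log (ne_of_gt hq.1))
    · exact continuousAt_const.mul
        ((Real.continuousAt_log h1q).comp ((continuous_const.sub continuous_id).continuousAt))
  exact hca.congr hcong.symm

lemma chernoffR_le {x y : ℝ} (hx : x ∈ Ioo (0:ℝ) 1) (hy : y ∈ Ioo (0:ℝ) 1)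
    {z : ℝ} (hz : z ∈ Ioo (0:ℝ) 1) :
    chernoffR x y ≤ max (klBerR z x) (klBerR z y) := by
  unfold chernoffR
  have hbdd : BddBelow (Set.range fun z : Set.Ioo (0:ℝ) 1 => max (klBerR z x) (klBerR z y)) := by
    refine ⟨0, ?_⟩
    rintro w ⟨⟨u, hu⟩, rfl⟩
    exact le_trans (klBerR_nonneg ⟨le_of_lt hu.1, le_of_lt hu.2⟩ hx) (le_max_left _ _)
  exact ciInf_le hbdd ⟨z, hz⟩

lemma klBerR_self_s9 {z : ℝ} (hz : z ∈ Ioo (0:ℝ) 1) : klBerR z z = 0 := by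
  unfold klBerR
  rw [div_self (ne_of_gt hz.1), div_self (sub_ne_zero.mpr (ne_of_gt hz.2)), Real.log_one]
  ring

/-- Lemma: if `D(a_t, μ) ≤ f_t(ε)` for all `t`, then for any `μ̃ ∈ (μ,1)`, `t ∈ ℕ`
and `δ ∈ (0,1)`: `f_t(δ·ε) < D*(μ̃,μ)` implies `U_t(f_t(δ)) < μ̃`. -/
theorem lil_klucb_stopping_lemma
    (μ : ℝ) (hμ : μ ∈ Set.Ioo (0:ℝ) 1)
    (a : ℕ → ℝ) (ha : ∀ t, a t ∈ Set.Icc (0:ℝ) 1)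
    (f : ℕ → ℝ → ℝ)
    (hf : ∀ t : ℕ, ∀ u v : ℝ, 0 < u → u ≤ v → v ≤ 1 → f t v ≤ f t u)
    (U : ℕ → ℝ → ℝ)
    (hU : ∀ t : ℕ, ∀ r : ℝ, ∀ S : Set ℝ,
      S = {m : ℝ | m ∈ Set.Ioc (a t) 1 ∧ klBer (a t) m ≤ ((r : ℝ) : EReal)} →
      (S.Nonempty → U t r = sSup S) ∧ (¬ S.Nonempty → U t r = a t))
    (ε : ℝ) (hε : ε ∈ Set.Ioo (0:ℝ) 1)
    (hdev : ∀ t : ℕ, 0 < t → klBer (a t) μ ≤ ((f t ε : ℝ) : EReal)) :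
    ∀ μt : ℝ, μt ∈ Set.Ioo μ 1 → ∀ t : ℕ, 0 < t → ∀ δ : ℝ, δ ∈ Set.Ioo (0:ℝ) 1 →
      f t (δ * ε) < chernoffR μt μ → U t (f t δ) < μt := by
  intro μt hμt t ht δ hδ hK
  set p := a t with hpdef
  have hp0 : (0:ℝ) ≤ p := (ha t).1
  have hp1 : p ≤ 1 := (ha t).2
  have hμt0 : 0 < μt := lt_trans hμ.1 hμt.1
  have hμtIoo : μt ∈ Ioo (0:ℝ) 1 := ⟨hμt0, hμt.2⟩
  set K := chernoffR μt μ with hKdef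
  -- from hdev : klBerR p μ ≤ f t ε
  have hBer : klBer p μ = ((klBerR p μ : ℝ) : EReal) := by
    unfold klBer
    rw [if_neg]
    rintro ⟨h1, _⟩
    rcases h1 with h | h
    · exact absurd h (ne_of_gt hμ.1)
    · exact absurd h (ne_of_lt hμ.2)
  have hB : klBerR p μ ≤ f t ε := by
    have := hdev t ht
    rw [hBer] at this
    exact_mod_cast this
  -- f t ε ≤ f t (δ * ε), f t δ ≤ f t (δ * ε)
  have hδε0 : 0 < δ * ε := mul_pos hδ.1 hε.1
  have hfε : f t ε ≤ f t (δ * ε) :=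
    hf t (δ * ε) ε hδε0 (by nlinarith [hδ.2, hε.1]) (le_of_lt hε.2)
  have hfδ : f t δ ≤ f t (δ * ε) :=
    hf t (δ * ε) δ hδε0 (by nlinarith [hε.2, hδ.1]) (le_of_lt hδ.2)
  have hBK : klBerR p μ < K := lt_of_le_of_lt (le_trans hB hfε) hK
  -- p < μt
  have hpμt : p < μt := by
    by_contra hle
    push_neg at hle
    have h1 : klBerR μt μ ≤ klBerR p μ :=
      klBerR_mono_left hμ (le_of_lt hμt.1) hle hp1
    have h2 : K ≤ klBerR μt μ := by
      have := chernoffR_le hμtIoo hμ hμtIoo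
      rwa [klBerR_self_s9 hμtIoo, max_eq_right (klBerR_nonneg ⟨le_of_lt hμt0, le_of_lt hμt.2⟩ hμ)]
        at this
    linarith
  -- K ≤ max (klBerR p μt) (klBerR p μ) via closure
  have hKmax : K ≤ max (klBerR p μt) (klBerR p μ) := by
    have hg : Continuous (fun w : ℝ => max (klBerR w μt) (klBerR w μ)) :=
      (klBerR_continuous_left (ne_of_gt hμt0) (ne_of_lt hμt.2)).max
        (klBerR_continuous_left (ne_of_gt hμ.1) (ne_of_lt hμ.2))
    have hclosed : IsClosed {w : ℝ | K ≤ max (klBerR w μt) (klBerR w μ)} :=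
      isClosed_le continuous_const hg
    have hsub : Ioo (0:ℝ) 1 ⊆ {w : ℝ | K ≤ max (klBerR w μt) (klBerR w μ)} :=
      fun z hz => chernoffR_le hμtIoo hμ hz
    have : Icc (0:ℝ) 1 ⊆ {w : ℝ | K ≤ max (klBerR w μt) (klBerR w μ)} := by
      rw [← closure_Ioo (by norm_num : (0:ℝ) ≠ 1)]
      exact closure_minimal hsub hclosed
    exact this ⟨hp0, hp1⟩
  have hKμt : K ≤ klBerR p μt := by
    rcases max_cases (klBerR p μt) (klBerR p μ) with ⟨he, _⟩ | ⟨he, _⟩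
    · rwa [he] at hKmax
    · rw [he] at hKmax; linarith
  have hlt : f t δ < klBerR p μt := lt_of_le_of_lt hfδ (lt_of_lt_of_le hK hKμt)
  -- find m0 ∈ (p, μt) with f t δ < klBerR p m0
  obtain ⟨m0, hm0f, hm0mem⟩ : ∃ m0, f t δ < klBerR p m0 ∧ m0 ∈ Ioo p μt := by
    have hcont := klBerR_continuousAt_right p hμtIoo
    have h1 : ∀ᶠ w in nhdsWithin μt (Iio μt), f t δ < klBerR p w :=
      nhdsWithin_le_nhds (hcont.eventually (eventually_gt_nhds hlt))
    have h2 : ∀ᶠ w in nhdsWithin μt (Iio μt), w ∈ Ioo p μt :=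
      Ioo_mem_nhdsLT_of_mem ⟨hpμt, le_refl μt⟩
    exact (h1.and h2).exists
  have hm0p : p < m0 := hm0mem.1
  have hm0μt : m0 < μt := hm0mem.2
  have hm00 : 0 < m0 := lt_of_le_of_lt hp0 hm0p
  -- the set S
  set S := {m : ℝ | m ∈ Set.Ioc p 1 ∧ klBer p m ≤ ((f t δ : ℝ) : EReal)} with hSdef
  obtain ⟨hU1, hU2⟩ := hU t (f t δ) S hSdef
  have hub : ∀ m ∈ S, m ≤ m0 := by
    rintro m ⟨⟨hmp, hm1⟩, hmkl⟩
    by_contra hgt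
    push_neg at hgt
    rcases eq_or_lt_of_le hm1 with h1 | h1
    · -- m = 1
      have hp1' : p ≠ 1 := ne_of_lt (lt_of_lt_of_le hmp hm1)
      rw [h1] at hmkl
      unfold klBer at hmkl
      rw [if_pos ⟨Or.inr rfl, hp1'⟩] at hmkl
      exact absurd hmkl (by simp)
    · have hmne : klBer p m = ((klBerR p m : ℝ) : EReal) := by
        unfold klBer
        rw [if_neg]
        rintro ⟨h, _⟩
        rcases h with h | h
        · exact absurd h (ne_of_gt (lt_of_le_of_lt hp0 hmp))
        · exact absurd h (ne_of_lt h1)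
      rw [hmne] at hmkl
      have hmkl' : klBerR p m ≤ f t δ := by exact_mod_cast hmkl
      have : klBerR p m0 ≤ klBerR p m :=
        klBerR_mono_right hp0 (le_of_lt hm0p) hm00 (le_of_lt hgt) h1
      linarith
  by_cases hne : S.Nonempty
  · rw [hU1 hne]
    exact lt_of_le_of_lt (csSup_le hne hub) hm0μt
  · rw [hU2 hne]
    exact hpμt
end

section
/- For 0 < μ < μ' < 1, the Chernoff information satisfies D*(μ, μ') ≥ min_{x ∈ [μ, μ']} (D(x,μ) + D(x,μ'))/2, and this minimum equals −log( √(μ·μ') + √((1−μ)·(1−μ')) ); in particular D*(μ, μ') ≥ −log( √(μ·μ') + √((1−μ)·(1−μ')) ). -/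
open Set

/-- Gibbs' inequality: KL divergence is nonnegative. -/
lemma klBerR_nonneg_s10 (x p : ℝ) (hx0 : 0 < x) (hx1 : x < 1) (hp0 : 0 < p) (hp1 : p < 1) :
    0 ≤ klBerR x p := by
  have h1 : Real.log (p / x) ≤ p / x - 1 :=
    Real.log_le_sub_one_of_pos (by apply div_pos <;> linarith)
  have h2 : Real.log ((1 - p) / (1 - x)) ≤ (1 - p) / (1 - x) - 1 :=
    Real.log_le_sub_one_of_pos (by apply div_pos <;> linarith)
  have e1 : Real.log (x / p) = -Real.log (p / x) := by
    rw [← Real.log_inv]; congr 1; field_simp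
  have e2 : Real.log ((1 - x) / (1 - p)) = -Real.log ((1 - p) / (1 - x)) := by
    rw [← Real.log_inv]; congr 1; field_simp
  have hx1' : (0:ℝ) < 1 - x := by linarith
  have h1' : x * Real.log (p / x) ≤ p - x := by
    have := mul_le_mul_of_nonneg_left h1 hx0.le
    calc x * Real.log (p / x) ≤ x * (p / x - 1) := this
      _ = p - x := by field_simp
  have h2' : (1 - x) * Real.log ((1 - p) / (1 - x)) ≤ x - p := by
    have := mul_le_mul_of_nonneg_left h2 hx1'.le
    calc (1 - x) * Real.log ((1 - p) / (1 - x)) ≤ (1 - x) * ((1 - p) / (1 - x) - 1) := this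
      _ = x - p := by field_simp; ring
  have : klBerR x p = -(x * Real.log (p / x)) + -((1 - x) * Real.log ((1 - p) / (1 - x))) := by
    unfold klBerR; rw [e1, e2]; ring
  rw [this]; linarith

lemma klBerR_self_s10 (p : ℝ) (hp0 : 0 < p) (hp1 : p < 1) : klBerR p p = 0 := by
  unfold klBerR
  rw [div_self hp0.ne', div_self (by linarith : (1:ℝ) - p ≠ 0), Real.log_one]
  ring

/-- The average of the two KL divergences is a shifted KL divergence. -/
lemma avg_identity (μ μ' z : ℝ) (hμ : 0 < μ) (hμμ' : μ < μ') (hμ' : μ' < 1)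
    (hz0 : 0 < z) (hz1 : z < 1) :
    (klBerR z μ + klBerR z μ') / 2 =
      klBerR z (Real.sqrt (μ * μ') /
          (Real.sqrt (μ * μ') + Real.sqrt ((1 - μ) * (1 - μ')))) -
        Real.log (Real.sqrt (μ * μ') + Real.sqrt ((1 - μ) * (1 - μ'))) := by
  set a := Real.sqrt (μ * μ') with ha
  set b := Real.sqrt ((1 - μ) * (1 - μ')) with hb
  have hμ'0 : 0 < μ' := lt_trans hμ hμμ'
  have hμ1 : μ < 1 := lt_trans hμμ' hμ'
  have h1μ : (0:ℝ) < 1 - μ := by linarith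
  have h1μ' : (0:ℝ) < 1 - μ' := by linarith
  have ha0 : 0 < a := Real.sqrt_pos.mpr (by positivity)
  have hb0 : 0 < b := Real.sqrt_pos.mpr (by positivity)
  have hs0 : 0 < a + b := by linarith
  have loga : Real.log a = (Real.log μ + Real.log μ') / 2 := by
    rw [ha, Real.log_sqrt (by positivity), Real.log_mul hμ.ne' hμ'0.ne']
  have logb : Real.log b = (Real.log (1 - μ) + Real.log (1 - μ')) / 2 := by
    rw [hb, Real.log_sqrt (by positivity), Real.log_mul h1μ.ne' h1μ'.ne']
  have h1p : 1 - a / (a + b) = b / (a + b) := by field_simp; ring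
  unfold klBerR
  rw [h1p, Real.log_div hz0.ne' hμ.ne', Real.log_div hz0.ne' hμ'0.ne',
    Real.log_div (by linarith : (1:ℝ) - z ≠ 0) h1μ.ne',
    Real.log_div (by linarith : (1:ℝ) - z ≠ 0) h1μ'.ne',
    Real.log_div hz0.ne' (by positivity : a / (a + b) ≠ 0),
    Real.log_div (by linarith : (1:ℝ) - z ≠ 0) (by positivity : b / (a + b) ≠ 0),
    Real.log_div ha0.ne' hs0.ne', Real.log_div hb0.ne' hs0.ne', loga, logb]
  ring

/-- The Bhattacharyya point lies in `[μ, μ']`. -/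
lemma p_mem (μ μ' : ℝ) (hμ : 0 < μ) (hμμ' : μ < μ') (hμ' : μ' < 1) :
    μ ≤ Real.sqrt (μ * μ') /
        (Real.sqrt (μ * μ') + Real.sqrt ((1 - μ) * (1 - μ'))) ∧
    Real.sqrt (μ * μ') /
        (Real.sqrt (μ * μ') + Real.sqrt ((1 - μ) * (1 - μ'))) ≤ μ' := by
  set a := Real.sqrt (μ * μ') with ha
  set b := Real.sqrt ((1 - μ) * (1 - μ')) with hb
  have hμ'0 : 0 < μ' := lt_trans hμ hμμ'
  have hμ1 : μ < 1 := lt_trans hμμ' hμ'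
  have h1μ : (0:ℝ) < 1 - μ := by linarith
  have h1μ' : (0:ℝ) < 1 - μ' := by linarith
  have ha0 : 0 < a := Real.sqrt_pos.mpr (by positivity)
  have hb0 : 0 < b := Real.sqrt_pos.mpr (by positivity)
  have hs0 : 0 < a + b := by linarith
  have ha2 : a ^ 2 = μ * μ' := Real.sq_sqrt (by positivity)
  have hb2 : b ^ 2 = (1 - μ) * (1 - μ') := Real.sq_sqrt (by positivity)
  have key : μ * (1 - μ') ≤ μ' * (1 - μ) := by nlinarith
  constructor
  · rw [le_div_iff₀ hs0]
    have hmb : μ * b ≤ a * (1 - μ) := by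
      refine le_of_pow_le_pow_left₀ two_ne_zero (by positivity) ?_
      have e1 : (μ * b) ^ 2 = μ * (1 - μ) * (μ * (1 - μ')) := by rw [mul_pow, hb2]; ring
      have e2 : (a * (1 - μ)) ^ 2 = μ * (1 - μ) * (μ' * (1 - μ)) := by rw [mul_pow, ha2]; ring
      rw [e1, e2]
      exact mul_le_mul_of_nonneg_left key (by positivity)
    nlinarith [hmb]
  · rw [div_le_iff₀ hs0]
    have hmb : a * (1 - μ') ≤ μ' * b := by
      refine le_of_pow_le_pow_left₀ two_ne_zero (by positivity) ?_
      have e1 : (a * (1 - μ')) ^ 2 = μ' * (1 - μ') * (μ * (1 - μ')) := by rw [mul_pow, ha2]; ring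
      have e2 : (μ' * b) ^ 2 = μ' * (1 - μ') * (μ' * (1 - μ)) := by rw [mul_pow, hb2]; ring
      rw [e1, e2]
      exact mul_le_mul_of_nonneg_left key (by positivity)
    nlinarith [hmb]

/-- For `0 < μ < μ' < 1`:
`D*(μ,μ') ≥ min_{x ∈ [μ,μ']} (D(x,μ)+D(x,μ'))/2`, this minimum equals
`-log(√(μμ') + √((1-μ)(1-μ')))`, and hence `D*(μ,μ') ≥ -log(√(μμ') + √((1-μ)(1-μ')))`. -/
theorem chernoff_ge_bhattacharyya
    (μ μ' : ℝ) (hμ : 0 < μ) (hμμ' : μ < μ') (hμ' : μ' < 1) :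
    chernoffR μ μ' ≥ ⨅ x : Set.Icc μ μ', (klBerR x μ + klBerR x μ') / 2 ∧
    (⨅ x : Set.Icc μ μ', (klBerR x μ + klBerR x μ') / 2) =
      -Real.log (Real.sqrt (μ * μ') + Real.sqrt ((1 - μ) * (1 - μ'))) ∧
    chernoffR μ μ' ≥
      -Real.log (Real.sqrt (μ * μ') + Real.sqrt ((1 - μ) * (1 - μ'))) := by
  have hμ'0 : 0 < μ' := lt_trans hμ hμμ'
  have hμ1 : μ < 1 := lt_trans hμμ' hμ'
  set a := Real.sqrt (μ * μ') with ha
  set b := Real.sqrt ((1 - μ) * (1 - μ')) with hb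
  set p := a / (a + b) with hpdef
  have ha0 : 0 < a := Real.sqrt_pos.mpr (by positivity)
  have hb0 : 0 < b := Real.sqrt_pos.mpr (by nlinarith)
  have hs0 : 0 < a + b := by linarith
  have hp0 : 0 < p := by positivity
  have hp1 : p < 1 := by
    rw [hpdef, div_lt_one hs0]; linarith
  -- lower bound for the average, valid for all z ∈ (0,1)
  have hlow : ∀ z : ℝ, 0 < z → z < 1 →
      -Real.log (a + b) ≤ (klBerR z μ + klBerR z μ') / 2 := by
    intro z hz0 hz1
    rw [avg_identity μ μ' z hμ hμμ' hμ' hz0 hz1]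
    have := klBerR_nonneg_s10 z p hz0 hz1 hp0 hp1
    linarith
  haveI : Nonempty (Set.Ioo (0:ℝ) 1) := ⟨⟨1/2, by norm_num⟩⟩
  haveI : Nonempty (Set.Icc μ μ') := ⟨⟨μ, le_refl μ, hμμ'.le⟩⟩
  -- third part: chernoff lower bound
  have hthird : chernoffR μ μ' ≥ -Real.log (a + b) := by
    refine le_ciInf fun z => ?_
    have hz0 : (0:ℝ) < z := z.2.1
    have hz1 : (z:ℝ) < 1 := z.2.2
    have h := hlow z hz0 hz1
    have h1 : klBerR z μ ≤ max (klBerR z μ) (klBerR z μ') := le_max_left _ _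
    have h2 : klBerR z μ' ≤ max (klBerR z μ) (klBerR z μ') := le_max_right _ _
    linarith
  -- second part: the Icc infimum evaluates to -log(a+b)
  have hsecond : (⨅ x : Set.Icc μ μ', (klBerR x μ + klBerR x μ') / 2) =
      -Real.log (a + b) := by
    have hpm := p_mem μ μ' hμ hμμ' hμ'
    have hlow' : ∀ x : Set.Icc μ μ',
        -Real.log (a + b) ≤ (klBerR x μ + klBerR x μ') / 2 := by
      intro x
      exact hlow x (lt_of_lt_of_le hμ x.2.1) (lt_of_le_of_lt x.2.2 hμ')
    refine le_antisymm ?_ (le_ciInf hlow')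
    have hbdd : BddBelow (Set.range fun x : Set.Icc μ μ' =>
        (klBerR x μ + klBerR x μ') / 2) := by
      refine ⟨-Real.log (a + b), ?_⟩
      rintro _ ⟨x, rfl⟩
      exact hlow' x
    have := ciInf_le hbdd (⟨p, hpm.1, hpm.2⟩ : Set.Icc μ μ')
    calc (⨅ x : Set.Icc μ μ', (klBerR x μ + klBerR x μ') / 2)
        ≤ (klBerR p μ + klBerR p μ') / 2 := this
      _ = klBerR p p - Real.log (a + b) := avg_identity μ μ' p hμ hμμ' hμ' hp0 hp1
      _ = -Real.log (a + b) := by rw [klBerR_self_s10 p hp0 hp1]; ring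
  exact ⟨hsecond ▸ hthird, hsecond, hthird⟩
end
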